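/- arXiv:1508.07257 — 9 statements merged into one kernel-verified Lean document; each statement's English description precedes it below -/
import Mathlib

section
/- The stabilizer of the zero vertex in the automorphism group of the augmented cube graph AQ_3 is isomorphic to the direct product D_8 × C_2 of the dihedral group of order 8 with the cyclic group of order 2. -/
/-- The standard basis vector `e_j` of `𝔽₂ⁿ`. -/
def stdBasis (n : ℕ) (j : Fin n) : Fin n → ZMod 2 := fun i => if i = j then 1 else 0

/-- The vector `v_k` of `𝔽₂ⁿ` having `1` in its last `k` coordinates and `0` elsewhere. -/
def lastOnes (n k : ℕ) : Fin n → ZMod 2 := fun i => if n - k ≤ i.val then 1 else 0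

/-- The generating set `S_n` of the augmented cube. -/
def genSet (n : ℕ) : Set (Fin n → ZMod 2) :=
  {x | (∃ j : Fin n, x = stdBasis n j) ∨ ∃ k : ℕ, 2 ≤ k ∧ k ≤ n ∧ x = lastOnes n k}

/-- The augmented cube graph `AQ_n`. -/
def AQ (n : ℕ) : SimpleGraph (Fin n → ZMod 2) where
  Adj x y := x ≠ y ∧ x + y ∈ genSet n
  symm := ⟨fun x y h => ⟨h.1.symm, by rw [add_comm]; exact h.2⟩⟩
  loopless := ⟨fun x h => h.1 rfl⟩

/-- The stabilizer of the zero vertex in the automorphism group of `AQ_n`. -/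
def zeroStab (n : ℕ) : Subgroup (AQ n ≃g AQ n) where
  carrier := {g | g 0 = 0}
  one_mem' := rfl
  mul_mem' := by
    intro a b ha hb
    show a (b 0) = 0
    rw [show b 0 = 0 from hb, show a 0 = 0 from ha]
  inv_mem' := by
    intro a ha
    show a.symm 0 = 0
    conv_lhs => rw [← show a 0 = 0 from ha]
    exact a.symm_apply_apply 0

/-! ### Auxiliary material -/

abbrev V3 := Fin 3 → ZMod 2

instance genSetDec (n : ℕ) : DecidablePred (· ∈ genSet n) := fun x =>
  decidable_of_iff ((∃ j : Fin n, x = stdBasis n j) ∨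
      ∃ k : Fin (n+1), 2 ≤ k.val ∧ k.val ≤ n ∧ x = lastOnes n k.val) (by
    constructor
    · rintro (h | ⟨k, h1, h2, h3⟩)
      · exact Or.inl h
      · exact Or.inr ⟨k.val, h1, h2, h3⟩
    · rintro (h | ⟨k, h1, h2, h3⟩)
      · exact Or.inl h
      · exact Or.inr ⟨⟨k, Nat.lt_succ_of_le h2⟩, h1, h2, h3⟩)

instance AQDec (n : ℕ) : DecidableRel (AQ n).Adj := fun x y =>
  decidable_of_iff (x ≠ y ∧ x + y ∈ genSet n) Iff.rfl

/-- The 4-cycle of the complement of `AQ 3` through the zero vertex. -/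
def cycA : ZMod 4 → V3 := fun i => ![![0,0,0], ![1,1,0], ![0,1,1], ![1,0,1]] (show Fin 4 from i)

/-- The other 4-cycle of the complement of `AQ 3`. -/
def cycB : ZMod 4 → V3 := fun i => ![![1,0,0], ![0,1,0], ![1,1,1], ![0,0,1]] (show Fin 4 from i)

/-- Labelling of the vertices of `AQ 3` by the two complement 4-cycles. -/
def lab : (ZMod 4 ⊕ ZMod 4) ≃ V3 where
  toFun := Sum.elim cycA cycB
  invFun := fun v =>
    if v = ![0,0,0] then .inl 0 else if v = ![1,1,0] then .inl 1
    else if v = ![0,1,1] then .inl 2 else if v = ![1,0,1] then .inl 3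
    else if v = ![1,0,0] then .inr 0 else if v = ![0,1,0] then .inr 1
    else if v = ![1,1,1] then .inr 2 else .inr 3
  left_inv := by decide
  right_inv := by decide

/-- The action of the dihedral group on `ZMod 4`. -/
def dihPerm : DihedralGroup 4 → Equiv.Perm (ZMod 4)
  | .r i => Equiv.addRight i
  | .sr i => (Equiv.neg _).trans (Equiv.addRight (-i))

/-- The reflection action of `C₂` on `ZMod 4` fixing `0` and `2`. -/
def refPerm (c : Multiplicative (ZMod 2)) : Equiv.Perm (ZMod 4) :=
  if Multiplicative.toAdd c = 0 then Equiv.refl _ else Equiv.neg _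

/-- The 16 candidate automorphisms, as permutations of the vertices. -/
def FF (p : DihedralGroup 4 × Multiplicative (ZMod 2)) : Equiv.Perm V3 :=
  lab.permCongr (Equiv.sumCongr (refPerm p.2) (dihPerm p.1))

lemma FF_mul : ∀ p q, FF (p * q) = FF p * FF q := by decide

lemma FF_inj : Function.Injective FF := by decide

lemma FF_adj : ∀ p, ∀ x y : V3, (AQ 3).Adj (FF p x) (FF p y) ↔ (AQ 3).Adj x y := by decide

lemma FF_zero : ∀ p, FF p 0 = 0 := by decide

set_option synthInstance.maxSize 2000 in
set_option maxHeartbeats 1000000 in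
lemma Ksurj : ∀ a c d : V3, (a = ![1,1,0] ∨ a = ![1,0,1]) → (AQ 3).Adj 0 c → c ≠ ![0,1,1] →
    (AQ 3).Adj 0 d → d ≠ ![0,1,1] → d ≠ c → ¬(AQ 3).Adj c d →
    ∃ p : DihedralGroup 4 × Multiplicative (ZMod 2),
      FF p ![1,1,0] = a ∧ FF p ![1,0,0] = c ∧ FF p ![0,1,0] = d := by decide

/-- Each candidate permutation really is a graph automorphism. -/
def isoOf (p : DihedralGroup 4 × Multiplicative (ZMod 2)) : AQ 3 ≃g AQ 3 :=
  { toEquiv := FF p, map_rel_iff' := fun {a b} => FF_adj p a b }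

/-- The homomorphism from `D₄ × C₂` to the stabilizer of the zero vertex. -/
def Jhom : DihedralGroup 4 × Multiplicative (ZMod 2) →* zeroStab 3 :=
  MonoidHom.mk' (fun p => ⟨isoOf p, FF_zero p⟩)
    (fun a b => Subtype.ext (RelIso.ext fun x => by
      show FF (a * b) x = (FF a * FF b) x
      rw [FF_mul]))

lemma Jhom_inj : Function.Injective Jhom := by
  intro a b h
  exact FF_inj (congrArg (fun e => RelIso.toEquiv e) (congrArg Subtype.val h))

/-- Rigidity: an automorphism of `AQ 3` fixing `000`, `110`, `100`, `010` is the identity. -/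
lemma rigid (w : AQ 3 ≃g AQ 3) (h0 : w 0 = 0) (h110 : w ![1,1,0] = ![1,1,0])
    (h100 : w ![1,0,0] = ![1,0,0]) (h010 : w ![0,1,0] = ![0,1,0]) : ∀ x, w x = x := by
  have hinj : Function.Injective w := w.toEquiv.injective
  have h101 : w ![1,0,1] = ![1,0,1] := by
    have L1 : ∀ y : V3, ¬(AQ 3).Adj 0 y → y ≠ 0 → y ≠ ![1,1,0] → y = ![1,0,1] := by decide
    refine L1 _ ?_ ?_ ?_
    · rw [← h0, w.map_adj_iff]; decide
    · rw [← h0]; exact hinj.ne (by decide)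
    · rw [← h110]; exact hinj.ne (by decide)
  have h011 : w ![0,1,1] = ![0,1,1] := by
    have L2 : ∀ y : V3, ¬(AQ 3).Adj ![1,1,0] y → y ≠ 0 → y ≠ ![1,1,0] → y = ![0,1,1] := by
      decide
    refine L2 _ ?_ ?_ ?_
    · rw [← h110, w.map_adj_iff]; decide
    · rw [← h0]; exact hinj.ne (by decide)
    · rw [← h110]; exact hinj.ne (by decide)
  have h001 : w ![0,0,1] = ![0,0,1] := by
    have L3 : ∀ y : V3, ¬(AQ 3).Adj ![1,0,0] y → y ≠ ![1,0,0] → y ≠ ![0,1,0] → y = ![0,0,1] := by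
      decide
    refine L3 _ ?_ ?_ ?_
    · rw [← h100, w.map_adj_iff]; decide
    · rw [← h100]; exact hinj.ne (by decide)
    · rw [← h010]; exact hinj.ne (by decide)
  have h111 : w ![1,1,1] = ![1,1,1] := by
    have L4 : ∀ y : V3, ¬(AQ 3).Adj ![0,1,0] y → y ≠ ![0,1,0] → y ≠ ![1,0,0] → y = ![1,1,1] := by
      decide
    refine L4 _ ?_ ?_ ?_
    · rw [← h010, w.map_adj_iff]; decide
    · rw [← h010]; exact hinj.ne (by decide)
    · rw [← h100]; exact hinj.ne (by decide)
  have hall : ∀ x : V3, x = 0 ∨ x = ![1,0,0] ∨ x = ![0,1,0] ∨ x = ![0,0,1] ∨ x = ![1,1,0] ∨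
      x = ![1,0,1] ∨ x = ![0,1,1] ∨ x = ![1,1,1] := by decide
  intro x
  rcases hall x with rfl | rfl | rfl | rfl | rfl | rfl | rfl | rfl <;> assumption

lemma Jhom_surj : Function.Surjective Jhom := by
  rintro ⟨u, hu⟩
  have hu' : u 0 = 0 := hu
  have hinj : Function.Injective u := u.toEquiv.injective
  have ha : u ![1,1,0] = ![1,1,0] ∨ u ![1,1,0] = ![1,0,1] := by
    have K1 : ∀ y : V3, ¬(AQ 3).Adj 0 y → y ≠ 0 → y = ![1,1,0] ∨ y = ![1,0,1] := by decide
    refine K1 _ ?_ ?_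
    · rw [← hu', u.map_adj_iff]; decide
    · rw [← hu']; exact hinj.ne (by decide)
  have hb : u ![0,1,1] = ![0,1,1] := by
    have K2 : ∀ a b : V3, (a = ![1,1,0] ∨ a = ![1,0,1]) → ¬(AQ 3).Adj a b → b ≠ 0 → b ≠ a →
        b = ![0,1,1] := by decide
    refine K2 _ _ ha ?_ ?_ ?_
    · rw [u.map_adj_iff]; decide
    · rw [← hu']; exact hinj.ne (by decide)
    · exact hinj.ne (by decide)
  have hc1 : (AQ 3).Adj 0 (u ![1,0,0]) := by rw [← hu', u.map_adj_iff]; decide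
  have hc2 : u ![1,0,0] ≠ ![0,1,1] := by rw [← hb]; exact hinj.ne (by decide)
  have hd1 : (AQ 3).Adj 0 (u ![0,1,0]) := by rw [← hu', u.map_adj_iff]; decide
  have hd2 : u ![0,1,0] ≠ ![0,1,1] := by rw [← hb]; exact hinj.ne (by decide)
  have hd3 : u ![0,1,0] ≠ u ![1,0,0] := hinj.ne (by decide)
  have hd4 : ¬(AQ 3).Adj (u ![1,0,0]) (u ![0,1,0]) := by rw [u.map_adj_iff]; decide
  obtain ⟨p, hp1, hp2, hp3⟩ := Ksurj _ _ _ ha hc1 hc2 hd1 hd2 hd3 hd4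
  -- the composite `v = (FF p)⁻¹ ∘ u` fixes the four vertices, hence is the identity
  set v : AQ 3 ≃g AQ 3 := u.trans (isoOf p).symm with hv
  have hv0 : v 0 = 0 := by
    show (FF p).symm (u 0) = 0
    rw [hu', Equiv.symm_apply_eq]
    exact (FF_zero p).symm
  have hv110 : v ![1,1,0] = ![1,1,0] := by
    show (FF p).symm (u ![1,1,0]) = ![1,1,0]
    rw [← hp1, Equiv.symm_apply_apply]
  have hv100 : v ![1,0,0] = ![1,0,0] := by
    show (FF p).symm (u ![1,0,0]) = ![1,0,0]
    rw [← hp2, Equiv.symm_apply_apply]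
  have hv010 : v ![0,1,0] = ![0,1,0] := by
    show (FF p).symm (u ![0,1,0]) = ![0,1,0]
    rw [← hp3, Equiv.symm_apply_apply]
  have hvx := rigid v hv0 hv110 hv100 hv010
  refine ⟨p, Subtype.ext (RelIso.ext fun x => ?_)⟩
  show FF p x = u x
  have h1 : (FF p).symm (u x) = x := hvx x
  exact ((Equiv.apply_symm_apply (FF p) (u x)).symm.trans (congrArg (FF p) h1)).symm

theorem stabilizer_AQ3_iso_D8_prod_C2 :
    Nonempty (zeroStab 3 ≃* DihedralGroup 4 × Multiplicative (ZMod 2)) :=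
  ⟨(MulEquiv.ofBijective Jhom ⟨Jhom_inj, Jhom_surj⟩).symm⟩
end

section
/- The group of additive automorphisms of 𝔽₂³ that map the set S_3 = {100, 010, 001, 011, 111} onto itself is isomorphic to the dihedral group D_8 of order 8. -/
/-- The multiplicative group structure on `AddAut A` (composition), as in the older Mathlib. -/
instance AddAut.group (A : Type*) [Add A] : Group (AddAut A) where
  mul g h := AddEquiv.trans h g
  one := AddEquiv.refl _
  inv := AddEquiv.symm
  mul_assoc _ _ _ := rfl
  one_mul _ := rfl
  mul_one _ := rfl
  inv_mul_cancel := AddEquiv.self_trans_symm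

/-- The group of additive automorphisms of `𝔽₂³` mapping `S_3` onto itself. -/
def linStab3 : Subgroup (AddAut (Fin 3 → ZMod 2)) where
  carrier := {f | ⇑f '' genSet 3 = genSet 3}
  one_mem' := by
    show ⇑(AddEquiv.refl (Fin 3 → ZMod 2)) '' genSet 3 = genSet 3
    simp
  mul_mem' := by
    intro a b ha hb
    show ⇑(b.trans a) '' genSet 3 = genSet 3
    have : ⇑(b.trans a) = ⇑a ∘ ⇑b := rfl
    rw [this, Set.image_comp, Set.mem_setOf_eq.mp hb, Set.mem_setOf_eq.mp ha]
  inv_mem' := by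
    intro a ha
    show ⇑a.symm '' genSet 3 = genSet 3
    conv_lhs => rw [← Set.mem_setOf_eq.mp ha, ← Set.image_comp]
    have h : ⇑a.symm ∘ ⇑a = id := funext fun x => a.symm_apply_apply x
    rw [h, Set.image_id]

lemma mem_genSet3 (x : V3) : x ∈ genSet 3 ↔
    (x = ![1,0,0] ∨ x = ![0,1,0] ∨ x = ![0,0,1] ∨ x = ![0,1,1] ∨ x = ![1,1,1]) := by
  constructor
  · rintro (⟨j, rfl⟩ | ⟨k, h2, h3, rfl⟩)
    · fin_cases j <;> decide
    · interval_cases k <;> decide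
  · rintro (rfl | rfl | rfl | rfl | rfl)
    · exact Or.inl ⟨0, by decide⟩
    · exact Or.inl ⟨1, by decide⟩
    · exact Or.inl ⟨2, by decide⟩
    · exact Or.inr ⟨2, by norm_num, by norm_num, by decide⟩
    · exact Or.inr ⟨3, by norm_num, by norm_num, by decide⟩

def Fm (a b c : V3) : V3 → V3 := fun x i => x 0 * a i + x 1 * b i + x 2 * c i

def mkAut (a b c a' b' c' : V3)
    (h1 : ∀ x, Fm a' b' c' (Fm a b c x) = x)
    (h2 : ∀ x, Fm a b c (Fm a' b' c' x) = x)
    (h3 : ∀ x y, Fm a b c (x + y) = Fm a b c x + Fm a b c y) : AddAut V3 :=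
  { toFun := Fm a b c, invFun := Fm a' b' c', left_inv := h1, right_inv := h2,
    map_add' := h3 }

def A1 : AddAut V3 := mkAut ![0,1,0] ![1,1,1] ![1,0,0] ![0,0,1] ![1,0,0] ![1,1,1]
  (by decide) (by decide) (by decide)
def A2 : AddAut V3 := mkAut ![1,1,1] ![0,0,1] ![0,1,0] ![1,1,1] ![0,0,1] ![0,1,0]
  (by decide) (by decide) (by decide)
def A3 : AddAut V3 := mkAut ![0,0,1] ![1,0,0] ![1,1,1] ![0,1,0] ![1,1,1] ![1,0,0]
  (by decide) (by decide) (by decide)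
def B0 : AddAut V3 := mkAut ![1,0,0] ![0,0,1] ![0,1,0] ![1,0,0] ![0,0,1] ![0,1,0]
  (by decide) (by decide) (by decide)
def B1 : AddAut V3 := mkAut ![0,0,1] ![1,1,1] ![1,0,0] ![0,0,1] ![1,1,1] ![1,0,0]
  (by decide) (by decide) (by decide)
def B2 : AddAut V3 := mkAut ![1,1,1] ![0,1,0] ![0,0,1] ![1,1,1] ![0,1,0] ![0,0,1]
  (by decide) (by decide) (by decide)
def B3 : AddAut V3 := mkAut ![0,1,0] ![1,0,0] ![1,1,1] ![0,1,0] ![1,0,0] ![1,1,1]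
  (by decide) (by decide) (by decide)

lemma mem_stab (f : AddAut V3)
    (h : ∀ x, (∃ y, (y = ![1,0,0] ∨ y = ![0,1,0] ∨ y = ![0,0,1] ∨ y = ![0,1,1] ∨ y = ![1,1,1]) ∧ f y = x)
      ↔ (x = ![1,0,0] ∨ x = ![0,1,0] ∨ x = ![0,0,1] ∨ x = ![0,1,1] ∨ x = ![1,1,1])) :
    f ∈ linStab3 := by
  show ⇑f '' genSet 3 = genSet 3
  ext x
  rw [Set.mem_image, mem_genSet3]
  simp only [mem_genSet3]
  exact h x

lemma hA1 : A1 ∈ linStab3 := mem_stab _ (by decide)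
lemma hA2 : A2 ∈ linStab3 := mem_stab _ (by decide)
lemma hA3 : A3 ∈ linStab3 := mem_stab _ (by decide)
lemma hB0 : B0 ∈ linStab3 := mem_stab _ (by decide)
lemma hB1 : B1 ∈ linStab3 := mem_stab _ (by decide)
lemma hB2 : B2 ∈ linStab3 := mem_stab _ (by decide)
lemma hB3 : B3 ∈ linStab3 := mem_stab _ (by decide)

instance : DecidableEq (AddAut V3) :=
  fun f g => decidable_of_iff (∀ x, f x = g x) DFunLike.ext_iff.symm

def tabr : ℕ → linStab3
  | 1 => ⟨A1, hA1⟩ | 2 => ⟨A2, hA2⟩ | 3 => ⟨A3, hA3⟩ | _ => 1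
def tabs : ℕ → linStab3
  | 1 => ⟨B1, hB1⟩ | 2 => ⟨B2, hB2⟩ | 3 => ⟨B3, hB3⟩ | _ => ⟨B0, hB0⟩

def tab : DihedralGroup 4 → linStab3
  | .r i => tabr i.val
  | .sr i => tabs i.val

def φ : DihedralGroup 4 →* linStab3 where
  toFun := tab
  map_one' := by decide
  map_mul' := by decide

lemma smul_helper (f : AddAut V3) (a : ZMod 2) (x : V3) : f (a • x) = a • f x := by
  rcases (by revert a; decide : ∀ b : ZMod 2, b = 0 ∨ b = 1) a with rfl | rfl
  · simp
  · simp

lemma det_lemma (f g : AddAut V3) (h1 : f ![1,0,0] = g ![1,0,0])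
    (h2 : f ![0,1,0] = g ![0,1,0]) (h3 : f ![0,0,1] = g ![0,0,1]) : f = g := by
  apply DFunLike.ext
  intro x
  have hx : x = x 0 • ![1,0,0] + x 1 • ![0,1,0] + x 2 • ![0,0,1] := by
    funext i
    fin_cases i <;> simp
  rw [hx]
  simp only [map_add, smul_helper, h1, h2, h3]

def untab (a b c : V3) : DihedralGroup 4 :=
  if b = ![0,1,0] ∧ c = ![0,0,1] then (if a = ![1,0,0] then .r 0 else .sr 2)
  else if b = ![1,1,1] ∧ c = ![1,0,0] then (if a = ![0,1,0] then .r 1 else .sr 1)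
  else if b = ![0,0,1] ∧ c = ![0,1,0] then (if a = ![1,1,1] then .r 2 else .sr 0)
  else (if a = ![0,0,1] then .r 3 else .sr 3)

set_option maxHeartbeats 2000000 in
theorem linStab3_iso_D8 : Nonempty (linStab3 ≃* DihedralGroup 4) := by
  have hinj : Function.Injective ⇑φ := by decide
  have hsurj : Function.Surjective ⇑φ := by
    rintro ⟨f, hf⟩
    have hmem : ∀ x ∈ genSet 3, f x ∈ genSet 3 := fun x hx => by
      rw [show genSet 3 = ⇑f '' genSet 3 from (Set.mem_setOf_eq.mp hf).symm]
      exact Set.mem_image_of_mem f hx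
    have key : ∀ x, x ∈ genSet 3 → (f x = ![1,0,0] ∨ f x = ![0,1,0] ∨ f x = ![0,0,1] ∨
        f x = ![0,1,1] ∨ f x = ![1,1,1]) :=
      fun x hx => (mem_genSet3 _).mp (hmem x hx)
    have ha := key ![1,0,0] ((mem_genSet3 _).mpr (by tauto))
    have hb := key ![0,1,0] ((mem_genSet3 _).mpr (by tauto))
    have hc := key ![0,0,1] ((mem_genSet3 _).mpr (by tauto))
    have hd := key ![0,1,1] ((mem_genSet3 _).mpr (by tauto))
    have he := key ![1,1,1] ((mem_genSet3 _).mpr (by tauto))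
    rw [show (![0,1,1] : V3) = ![0,1,0] + ![0,0,1] by decide, map_add] at hd
    rw [show (![1,1,1] : V3) = ![1,0,0] + (![0,1,0] + ![0,0,1]) by decide, map_add, map_add] at he
    have n12 : f ![1,0,0] ≠ f ![0,1,0] := fun h => (by decide : (![1,0,0] : V3) ≠ ![0,1,0]) (f.injective h)
    have n13 : f ![1,0,0] ≠ f ![0,0,1] := fun h => (by decide : (![1,0,0] : V3) ≠ ![0,0,1]) (f.injective h)
    have n23 : f ![0,1,0] ≠ f ![0,0,1] := fun h => (by decide : (![0,1,0] : V3) ≠ ![0,0,1]) (f.injective h)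
    rcases ha with ha | ha | ha | ha | ha <;> rcases hb with hb | hb | hb | hb | hb <;>
      rcases hc with hc | hc | hc | hc | hc <;> rw [hb, hc] at hd <;> rw [ha, hb, hc] at he <;>
      first
        | exact (n12 (ha.trans hb.symm)).elim
        | exact (n13 (ha.trans hc.symm)).elim
        | exact (n23 (hb.trans hc.symm)).elim
        | exact absurd hd (by decide)
        | exact absurd he (by decide)
        | (refine ⟨untab (f ![1,0,0]) (f ![0,1,0]) (f ![0,0,1]),
            Subtype.ext (det_lemma _ _ ?_ ?_ ?_)⟩ <;> rw [ha, hb, hc] <;> decide)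
  exact ⟨(MulEquiv.ofBijective φ ⟨hinj, hsurj⟩).symm⟩
end

section
/- The augmented cube graph AQ_3 is a non-normal Cayley graph: there exists a graph automorphism g of AQ_3 that fixes the zero vertex but is not additive, i.e., g(x + y) ≠ g(x) + g(y) for some x, y ∈ 𝔽₂³. -/
/-- Decidable description of adjacency in `AQ 3`. -/
def D (x y : Fin 3 → ZMod 2) : Prop :=
  x ≠ y ∧ ((∃ j : Fin 3, x + y = stdBasis 3 j) ∨
    x + y = lastOnes 3 2 ∨ x + y = lastOnes 3 3)

instance (x y : Fin 3 → ZMod 2) : Decidable (D x y) := by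
  unfold D; infer_instance

lemma adj_iff (x y : Fin 3 → ZMod 2) : (AQ 3).Adj x y ↔ D x y := by
  constructor
  · rintro ⟨h1, h2 | ⟨k, hk2, hk3, hk⟩⟩
    · exact ⟨h1, Or.inl h2⟩
    · interval_cases k
      · exact ⟨h1, Or.inr (Or.inl hk)⟩
      · exact ⟨h1, Or.inr (Or.inr hk)⟩
  · rintro ⟨h1, h2 | h2 | h2⟩
    · exact ⟨h1, Or.inl h2⟩
    · exact ⟨h1, Or.inr ⟨2, by norm_num, by norm_num, h2⟩⟩
    · exact ⟨h1, Or.inr ⟨3, by norm_num, by norm_num, h2⟩⟩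

def a : Fin 3 → ZMod 2 := ![0, 1, 0]
def b : Fin 3 → ZMod 2 := ![0, 0, 1]

lemma swap_pres : ∀ x y : Fin 3 → ZMod 2,
    D (Equiv.swap a b x) (Equiv.swap a b y) ↔ D x y := by decide

/-- `AQ_3` is a non-normal Cayley graph: some automorphism fixing the zero
vertex is not additive. -/
theorem AQ3_nonnormal :
    ∃ g : AQ 3 ≃g AQ 3, g 0 = 0 ∧ ∃ x y : Fin 3 → ZMod 2, g (x + y) ≠ g x + g y := by
  refine ⟨⟨Equiv.swap a b, ?_⟩, ?_, ![1,0,0], ![0,1,0], ?_⟩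
  · intro x y
    rw [Equiv.coe_fn_mk, adj_iff, adj_iff]
    exact swap_pres x y
  · exact (by decide : Equiv.swap a b 0 = 0)
  · exact (by decide : Equiv.swap a b (![1,0,0] + ![0,1,0]) ≠
      Equiv.swap a b ![1,0,0] + Equiv.swap a b ![0,1,0])
end

section
/- For every n ≥ 4, the augmented cube graph AQ_n is a normal Cayley graph: every graph automorphism g of AQ_n with g(0) = 0 is additive, i.e., g(x + y) = g(x) + g(y) for all x, y ∈ 𝔽₂ⁿ (and consequently g maps the generating set S_n onto itself). -/
namespace AQaux


variable {n : ℕ}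

lemma zmod2 (a : ZMod 2) : a = 0 ∨ a = 1 := by revert a; decide

lemma addself (x : Fin n → ZMod 2) : x + x = 0 := by
  funext i
  have := zmod2 (x i)
  simp only [Pi.add_apply, Pi.zero_apply]
  rcases this with h | h <;> rw [h] <;> decide

lemma stdBasis_apply (j i : Fin n) : stdBasis n j i = if i = j then 1 else 0 := rfl

lemma lastOnes_apply (k : ℕ) (i : Fin n) : lastOnes n k i = if n - k ≤ i.val then 1 else 0 := rfl

lemma stdBasis_ne_zero (j : Fin n) : stdBasis n j ≠ 0 := by
  intro h
  have := congrFun h j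
  simp [stdBasis] at this

lemma lastOnes_ne_zero (hn : 1 ≤ n) {k : ℕ} (hk : 1 ≤ k) : lastOnes n k ≠ 0 := by
  intro h
  have := congrFun h ⟨n-1, by omega⟩
  simp only [lastOnes, Pi.zero_apply] at this
  rw [if_pos (by omega)] at this
  exact one_ne_zero this

lemma zero_not_mem (hn : 1 ≤ n) : (0 : Fin n → ZMod 2) ∉ genSet n := by
  rintro (⟨j, hj⟩ | ⟨k, hk2, hkn, hk⟩)
  · exact stdBasis_ne_zero j hj.symm
  · exact lastOnes_ne_zero hn (by omega) hk.symm

lemma stdBasis_inj {j j' : Fin n} (h : stdBasis n j = stdBasis n j') : j = j' := by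
  by_contra hne
  have := congrFun h j
  simp only [stdBasis, if_pos rfl] at this
  rw [if_neg hne] at this
  exact one_ne_zero this

lemma lastOnes_inj {k k' : ℕ} (hk : k ≤ n) (hk' : k' ≤ n) (h : lastOnes n k = lastOnes n k') :
    k = k' := by
  by_contra hne
  rcases Nat.lt_or_ge k k' with hlt | hge
  · have := congrFun h ⟨n - k', by omega⟩
    simp only [lastOnes] at this
    rw [if_neg (by omega), if_pos (by omega)] at this
    exact one_ne_zero this.symm
  · have hlt : k' < k := by omega
    have := congrFun h ⟨n - k, by omega⟩
    simp only [lastOnes] at this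
    rw [if_pos (by omega), if_neg (by omega)] at this
    exact one_ne_zero this

lemma lastOnes_zero : lastOnes n 0 = 0 := by
  funext i
  simp only [lastOnes, Pi.zero_apply]
  rw [if_neg (by omega)]

lemma lastOnes_succ {k : ℕ} (hk : k < n) :
    lastOnes n (k+1) = lastOnes n k + stdBasis n ⟨n-1-k, by omega⟩ := by
  funext i
  simp only [lastOnes, stdBasis, Pi.add_apply, Fin.ext_iff]
  rcases Nat.lt_trichotomy i.val (n-1-k) with h | h | h
  · rw [if_neg (by omega), if_neg (by omega), if_neg (by omega)]
    decide
  · rw [if_pos (by omega), if_neg (by omega), if_pos (by omega)]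
    decide
  · rw [if_pos (by omega), if_pos (by omega), if_neg (by omega)]
    decide

lemma lastOnes_one (hn : 1 ≤ n) : lastOnes n 1 = stdBasis n ⟨n-1, by omega⟩ := by
  have := lastOnes_succ (n := n) (k := 0) (by omega)
  simpa [lastOnes_zero] using this

lemma stdBasis_mem (j : Fin n) : stdBasis n j ∈ genSet n := Or.inl ⟨j, rfl⟩

lemma lastOnes_mem (hn : 1 ≤ n) {k : ℕ} (h1 : 1 ≤ k) (h2 : k ≤ n) : lastOnes n k ∈ genSet n := by
  rcases Nat.lt_or_ge k 2 with h | h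
  · have : k = 1 := by omega
    subst this
    rw [lastOnes_one hn]
    exact stdBasis_mem _
  · exact Or.inr ⟨k, h, h2, rfl⟩

lemma lastOnes_ne_stdBasis {k : ℕ} (hk2 : 2 ≤ k) (hkn : k ≤ n) (b : Fin n) :
    lastOnes n k ≠ stdBasis n b := by
  intro h
  have h1 := congrFun h ⟨n-1, by omega⟩
  have h2 := congrFun h ⟨n-2, by omega⟩
  simp only [lastOnes, stdBasis, Fin.ext_iff] at h1 h2
  rw [if_pos (by omega)] at h1 h2
  split_ifs at h1 with hb1
  · split_ifs at h2 with hb2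
    · omega
    · exact one_ne_zero h2
  · exact one_ne_zero h1





open Classical in
noncomputable def ind (n : ℕ) (P : ℕ → Prop) : Fin n → ZMod 2 := fun i => if P i.val then 1 else 0

lemma ind_eq_ind_iff {P Q : ℕ → Prop} : ind n P = ind n Q ↔ ∀ t, t < n → (P t ↔ Q t) := by
  classical
  constructor
  · intro h t ht
    have := congrFun h ⟨t, ht⟩
    simp only [ind, Fin.val_mk] at this
    by_cases h1 : P t <;> by_cases h2 : Q t
    · exact ⟨fun _ => h2, fun _ => h1⟩
    · rw [if_pos h1, if_neg h2] at this
      exact absurd this one_ne_zero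
    · rw [if_neg h1, if_pos h2] at this
      exact absurd this.symm one_ne_zero
    · exact ⟨fun hp => absurd hp h1, fun hq => absurd hq h2⟩
  · intro h
    funext i
    simp only [ind]
    by_cases hp : P i.val
    · rw [if_pos hp, if_pos ((h i.val i.isLt).mp hp)]
    · rw [if_neg hp, if_neg (fun hq => hp ((h i.val i.isLt).mpr hq))]

lemma stdBasis_ind (j : Fin n) : stdBasis n j = ind n (fun t => t = j.val) := by
  classical
  funext i
  simp only [stdBasis, ind]
  by_cases h : i = j
  · rw [if_pos h, if_pos (Fin.ext_iff.mp h)]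
  · rw [if_neg h, if_neg (fun hv => h (Fin.ext hv))]

lemma lastOnes_ind (k : ℕ) : lastOnes n k = ind n (fun t => n - k ≤ t) := by
  classical
  funext i
  simp only [lastOnes, ind]
  by_cases h : n - k ≤ i.val
  · rw [if_pos h, if_pos h]
  · rw [if_neg h, if_neg h]

lemma ind_add (P Q : ℕ → Prop) :
    ind n P + ind n Q = ind n (fun t => ¬(P t ↔ Q t)) := by
  classical
  funext i
  simp only [ind, Pi.add_apply]
  by_cases hp : P i.val <;> by_cases hq : Q i.val <;> simp [hp, hq] <;> decide

lemma zero_ind : (0 : Fin n → ZMod 2) = ind n (fun _ => False) := by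
  classical
  funext i
  simp [ind]

lemma ind_mem_iff (hn : 1 ≤ n) (P : ℕ → Prop) :
    ind n P ∈ genSet n ↔
      (∃ j, j < n ∧ ∀ t, t < n → (P t ↔ t = j)) ∨
      (∃ k, 2 ≤ k ∧ k ≤ n ∧ ∀ t, t < n → (P t ↔ n - k ≤ t)) := by
  constructor
  · rintro (⟨j, hj⟩ | ⟨k, hk2, hkn, hk⟩)
    · left
      refine ⟨j.val, j.isLt, ?_⟩
      rw [stdBasis_ind] at hj
      exact ind_eq_ind_iff.mp hj
    · right
      refine ⟨k, hk2, hkn, ?_⟩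
      rw [lastOnes_ind] at hk
      exact ind_eq_ind_iff.mp hk
  · rintro (⟨j, hjn, hj⟩ | ⟨k, hk2, hkn, hk⟩)
    · left
      exact ⟨⟨j, hjn⟩, by rw [stdBasis_ind]; exact ind_eq_ind_iff.mpr hj⟩
    · right
      exact ⟨k, hk2, hkn, by rw [lastOnes_ind]; exact ind_eq_ind_iff.mpr hk⟩

lemma M1 (hn : 4 ≤ n) {a b : Fin n} (hab : a ≠ b) :
    stdBasis n a + stdBasis n b ∈ genSet n ↔
      ((a.val = n-2 ∧ b.val = n-1) ∨ (a.val = n-1 ∧ b.val = n-2)) := by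
  have habv : a.val ≠ b.val := fun h => hab (Fin.ext h)
  have ha := a.isLt
  have hb := b.isLt
  rw [stdBasis_ind, stdBasis_ind, ind_add, ind_mem_iff (by omega)]
  constructor
  · rintro (⟨j, hjn, H⟩ | ⟨k, hk2, hkn, H⟩)
    · have h1 := H a.val (by omega)
      have h2 := H b.val (by omega)
      omega
    · have h1 := H a.val (by omega)
      have h2 := H b.val (by omega)
      have h3 := H (n-1) (by omega)
      have h4 := H (n-2) (by omega)
      omega
  · rintro (⟨h1, h2⟩ | ⟨h1, h2⟩)
    · right; exact ⟨2, by omega, by omega, by intro t ht; omega⟩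
    · right; exact ⟨2, by omega, by omega, by intro t ht; omega⟩

lemma M2 (hn : 4 ≤ n) {a : Fin n} {k : ℕ} (hk2 : 2 ≤ k) (hkn : k ≤ n) :
    stdBasis n a + lastOnes n k ∈ genSet n ↔
      (a.val + k = n-1 ∨ a.val + k = n ∨ (k = 2 ∧ a.val = n-1)) := by
  have ha := a.isLt
  rw [stdBasis_ind, lastOnes_ind, ind_add, ind_mem_iff (by omega)]
  constructor
  · rintro (⟨j, hjn, H⟩ | ⟨l, hl2, hln, H⟩)
    · have h1 := H a.val (by omega)
      have h2 := H (n-1) (by omega)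
      have h3 := H (n-2) (by omega)
      have h4 := H (n-k) (by omega)
      have h5 := H (n-3) (by omega)
      omega
    · have h1 := H a.val (by omega)
      have h2 := H (n-1) (by omega)
      have h3 := H (n-k) (by omega)
      have h4 := H (n-k-1) (by omega)
      have h5 := H (n-l) (by omega)
      omega
  · rintro (h | h | ⟨h1, h2⟩)
    · right; exact ⟨k+1, by omega, by omega, by intro t ht; omega⟩
    · rcases Nat.eq_or_lt_of_le hk2 with h2 | h2
      · left; exact ⟨n-1, by omega, by intro t ht; omega⟩
      · right; exact ⟨k-1, by omega, by omega, by intro t ht; omega⟩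
    · left; exact ⟨n-2, by omega, by intro t ht; omega⟩

lemma M3 (hn : 4 ≤ n) {k l : ℕ} (hk2 : 2 ≤ k) (hkl : k < l) (hln : l ≤ n) :
    lastOnes n k + lastOnes n l ∈ genSet n ↔ l = k + 1 := by
  rw [lastOnes_ind, lastOnes_ind, ind_add, ind_mem_iff (by omega)]
  constructor
  · rintro (⟨j, hjn, H⟩ | ⟨m, hm2, hmn, H⟩)
    · have h1 := H (n-l) (by omega)
      have h2 := H (n-k-1) (by omega)
      omega
    · have h1 := H (n-1) (by omega)
      omega
  · intro h
    left
    exact ⟨n-k-1, by omega, by intro t ht; omega⟩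





lemma K1aux (hn : 4 ≤ n) {p q r : Fin n} (hpq : p ≠ q) (hpr : p ≠ r) (hqr : q ≠ r)
    (s1 : stdBasis n p + stdBasis n q ∈ genSet n)
    (s2 : stdBasis n p + stdBasis n r ∈ genSet n)
    (s3 : stdBasis n q + stdBasis n r ∈ genSet n) : False := by
  rw [M1 hn hpq] at s1
  rw [M1 hn hpr] at s2
  rw [M1 hn hqr] at s3
  have h1 : q.val ≠ r.val := fun h => hqr (Fin.ext h)
  omega

lemma K2aux (hn : 4 ≤ n) {p q : Fin n} {k : ℕ} (hk2 : 2 ≤ k) (hkn : k ≤ n) (hpq : p ≠ q)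
    (s1 : stdBasis n p + stdBasis n q ∈ genSet n)
    (s2 : stdBasis n p + lastOnes n k ∈ genSet n)
    (s3 : stdBasis n q + lastOnes n k ∈ genSet n) :
    stdBasis n p + stdBasis n q + lastOnes n k = 0 := by
  rw [M1 hn hpq] at s1
  rw [M2 hn hk2 hkn] at s2
  rw [M2 hn hk2 hkn] at s3
  rw [stdBasis_ind, stdBasis_ind, lastOnes_ind, ind_add, ind_add, zero_ind, ind_eq_ind_iff]
  intro t ht
  rw [iff_false, not_not]
  omega

lemma K3aux (hn : 4 ≤ n) {p : Fin n} {k l : ℕ} (hk2 : 2 ≤ k) (hkn : k ≤ n)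
    (hl2 : 2 ≤ l) (hln : l ≤ n) (hkl : k ≠ l)
    (s1 : stdBasis n p + lastOnes n k ∈ genSet n)
    (s2 : stdBasis n p + lastOnes n l ∈ genSet n)
    (s3 : lastOnes n k + lastOnes n l ∈ genSet n) :
    stdBasis n p + lastOnes n k + lastOnes n l = 0 := by
  rw [M2 hn hk2 hkn] at s1
  rw [M2 hn hl2 hln] at s2
  have s3' : l = k + 1 ∨ k = l + 1 := by
    rcases Nat.lt_or_ge k l with h | h
    · left; exact (M3 hn hk2 h hln).mp s3
    · right
      rw [add_comm] at s3
      exact (M3 hn hl2 (by omega) hkn).mp s3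
  rw [stdBasis_ind, lastOnes_ind, lastOnes_ind, ind_add, ind_add, zero_ind, ind_eq_ind_iff]
  intro t ht
  rw [iff_false, not_not]
  omega

lemma K4aux (hn : 4 ≤ n) {k l m : ℕ} (hk2 : 2 ≤ k) (hkn : k ≤ n)
    (hl2 : 2 ≤ l) (hln : l ≤ n) (hm2 : 2 ≤ m) (hmn : m ≤ n)
    (hkl : k ≠ l) (hkm : k ≠ m) (hlm : l ≠ m)
    (s1 : lastOnes n k + lastOnes n l ∈ genSet n)
    (s2 : lastOnes n k + lastOnes n m ∈ genSet n)
    (s3 : lastOnes n l + lastOnes n m ∈ genSet n) : False := by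
  have d1 : l = k + 1 ∨ k = l + 1 := by
    rcases Nat.lt_or_ge k l with h | h
    · left; exact (M3 hn hk2 h hln).mp s1
    · right; rw [add_comm] at s1; exact (M3 hn hl2 (by omega) hkn).mp s1
  have d2 : m = k + 1 ∨ k = m + 1 := by
    rcases Nat.lt_or_ge k m with h | h
    · left; exact (M3 hn hk2 h hmn).mp s2
    · right; rw [add_comm] at s2; exact (M3 hn hm2 (by omega) hkn).mp s2
  have d3 : m = l + 1 ∨ l = m + 1 := by
    rcases Nat.lt_or_ge l m with h | h
    · left; exact (M3 hn hl2 h hmn).mp s3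
    · right; rw [add_comm] at s3; exact (M3 hn hm2 (by omega) hln).mp s3
  omega

lemma triK (hn : 4 ≤ n) {a b c : Fin n → ZMod 2}
    (ha : a ∈ genSet n) (hb : b ∈ genSet n) (hc : c ∈ genSet n)
    (hab : a ≠ b) (hac : a ≠ c) (hbc : b ≠ c)
    (sab : a + b ∈ genSet n) (sac : a + c ∈ genSet n) (sbc : b + c ∈ genSet n) :
    a + b + c = 0 := by
  rcases ha with ⟨p, rfl⟩ | ⟨k, hk2, hkn, rfl⟩
  · rcases hb with ⟨q, rfl⟩ | ⟨l, hl2, hln, rfl⟩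
    · rcases hc with ⟨r, rfl⟩ | ⟨m, hm2, hmn, rfl⟩
      · exact absurd (K1aux hn (fun h => hab (by rw [h])) (fun h => hac (by rw [h]))
          (fun h => hbc (by rw [h])) sab sac sbc) (fun h => h)
      · exact K2aux hn hm2 hmn (fun h => hab (by rw [h])) sab sac sbc
    · rcases hc with ⟨r, rfl⟩ | ⟨m, hm2, hmn, rfl⟩
      · -- a = e_p, b = v_l, c = e_r
        have := K2aux hn hl2 hln (n := n) (p := p) (q := r)
          (fun h => hac (by rw [h])) sac sab (by rw [add_comm] at sbc; exact sbc)
        calc stdBasis n p + lastOnes n l + stdBasis n r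
            = stdBasis n p + stdBasis n r + lastOnes n l := by abel
          _ = 0 := this
      · exact K3aux hn hl2 hln hm2 hmn (fun h => hbc (by rw [h])) sab sac sbc
  · rcases hb with ⟨q, rfl⟩ | ⟨l, hl2, hln, rfl⟩
    · rcases hc with ⟨r, rfl⟩ | ⟨m, hm2, hmn, rfl⟩
      · -- a = v_k, b = e_q, c = e_r
        have := K2aux hn hk2 hkn (n := n) (p := q) (q := r)
          (fun h => hbc (by rw [h])) sbc (by rw [add_comm] at sab; exact sab)
          (by rw [add_comm] at sac; exact sac)
        calc lastOnes n k + stdBasis n q + stdBasis n r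
            = stdBasis n q + stdBasis n r + lastOnes n k := by abel
          _ = 0 := this
      · -- a = v_k, b = e_q, c = v_m
        have := K3aux hn hk2 hkn hm2 hmn (n := n) (p := q)
          (fun h => hac (by rw [h])) (by rw [add_comm] at sab; exact sab) sbc sac
        calc lastOnes n k + stdBasis n q + lastOnes n m
            = stdBasis n q + lastOnes n k + lastOnes n m := by abel
          _ = 0 := this
    · rcases hc with ⟨r, rfl⟩ | ⟨m, hm2, hmn, rfl⟩
      · -- a = v_k, b = v_l, c = e_r
        have := K3aux hn hk2 hkn hl2 hln (n := n) (p := r)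
          (fun h => hab (by rw [h])) (by rw [add_comm] at sac; exact sac)
          (by rw [add_comm] at sbc; exact sbc) sab
        calc lastOnes n k + lastOnes n l + stdBasis n r
            = stdBasis n r + lastOnes n k + lastOnes n l := by abel
          _ = 0 := this
      · exact absurd (K4aux hn hk2 hkn hl2 hln hm2 hmn
          (fun h => hab (by rw [h])) (fun h => hac (by rw [h]))
          (fun h => hbc (by rw [h])) sab sac sbc) (fun h => h)





lemma last_ne_last {k l : ℕ} (hk : k ≤ n) (hl : l ≤ n) (h : k ≠ l) :
    lastOnes n k ≠ lastOnes n l := fun he => h (lastOnes_inj hk hl he)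

lemma std_ne_std {a b : Fin n} (h : a.val ≠ b.val) : stdBasis n a ≠ stdBasis n b :=
  fun he => h (congrArg Fin.val (stdBasis_inj he))

lemma last_ne_std (hn : 4 ≤ n) {k : ℕ} {b : Fin n} (h : ¬(k = 1 ∧ b.val = n-1)) :
    lastOnes n k ≠ stdBasis n b := by
  intro he
  rw [lastOnes_ind, stdBasis_ind, ind_eq_ind_iff] at he
  have h1 := he (n-1) (by omega)
  have h2 := he b.val b.isLt
  have h3 := he (n-2) (by omega)
  omega

lemma std_ne_last (hn : 4 ≤ n) {k : ℕ} {b : Fin n} (h : ¬(k = 1 ∧ b.val = n-1)) :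
    stdBasis n b ≠ lastOnes n k := (last_ne_std hn h).symm

open Classical in
noncomputable def rdeg (n : ℕ) (d : Fin n → ZMod 2) : ℕ :=
  (Finset.univ.filter fun s => s ∈ genSet n ∧ d + s ∈ genSet n).card

open Classical in
lemma mem_rdeg_filter {d s : Fin n → ZMod 2} :
    s ∈ (Finset.univ.filter fun s => s ∈ genSet n ∧ d + s ∈ genSet n) ↔
      s ∈ genSet n ∧ d + s ∈ genSet n := by
  rw [Finset.mem_filter]
  simp only [Finset.mem_univ, true_and]

lemma N1 (hn : 4 ≤ n) (j : Fin n) : rdeg n (stdBasis n j) = 2 := by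
  classical
  have hjlt := j.isLt
  unfold rdeg
  by_cases hj : j.val = n-1
  · have hset : (Finset.univ.filter fun s =>
        s ∈ genSet n ∧ stdBasis n j + s ∈ genSet n) =
        {stdBasis n ⟨n-2, by omega⟩, lastOnes n 2} := by
      ext s
      rw [mem_rdeg_filter, Finset.mem_insert, Finset.mem_singleton]
      constructor
      · rintro ⟨(⟨b, rfl⟩ | ⟨k, hk2, hkn, rfl⟩), hsum⟩
        · have hjb : j ≠ b := by
            intro hh
            rw [hh, addself] at hsum
            exact zero_not_mem (by omega) hsum
          rw [M1 hn hjb] at hsum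
          left
          have : b = (⟨n-2, by omega⟩ : Fin n) := Fin.ext (by simp only [Fin.val_mk]; omega)
          rw [this]
        · rw [M2 hn hk2 hkn] at hsum
          right
          have : k = 2 := by omega
          rw [this]
      · rintro (rfl | rfl)
        · refine ⟨stdBasis_mem _, ?_⟩
          have he : stdBasis n j + stdBasis n ⟨n-2, by omega⟩ = lastOnes n 2 := by
            simp only [stdBasis_ind, lastOnes_ind, ind_add, Fin.val_mk]
            rw [ind_eq_ind_iff]
            intro t ht
            omega
          rw [he]
          exact lastOnes_mem (by omega) (by omega) (by omega)
        · refine ⟨lastOnes_mem (by omega) (by omega) (by omega), ?_⟩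
          have he : stdBasis n j + lastOnes n 2 = stdBasis n ⟨n-2, by omega⟩ := by
            simp only [stdBasis_ind, lastOnes_ind, ind_add, Fin.val_mk]
            rw [ind_eq_ind_iff]
            intro t ht
            omega
          rw [he]
          exact stdBasis_mem _
    rw [hset]
    exact Finset.card_pair (std_ne_last hn (by simp only [Fin.val_mk]; omega))
  · have hj2 : j.val ≤ n-2 := by omega
    have hset : (Finset.univ.filter fun s =>
        s ∈ genSet n ∧ stdBasis n j + s ∈ genSet n) =
        {lastOnes n (n-1-j.val), lastOnes n (n-j.val)} := by
      ext s
      rw [mem_rdeg_filter, Finset.mem_insert, Finset.mem_singleton]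
      constructor
      · rintro ⟨(⟨b, rfl⟩ | ⟨k, hk2, hkn, rfl⟩), hsum⟩
        · have hjb : j ≠ b := by
            intro hh
            rw [hh, addself] at hsum
            exact zero_not_mem (by omega) hsum
          rw [M1 hn hjb] at hsum
          left
          -- j = n-2, b = n-1, so s = e_{n-1} = lastOnes 1 = lastOnes (n-1-j)
          rw [stdBasis_ind, lastOnes_ind, ind_eq_ind_iff]
          intro t ht
          omega
        · rw [M2 hn hk2 hkn] at hsum
          rcases hsum with h | h | h
          · left
            have : k = n-1-j.val := by omega
            rw [this]
          · right
            have : k = n-j.val := by omega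
            rw [this]
          · omega
      · rintro (rfl | rfl)
        · refine ⟨lastOnes_mem (by omega) (by omega) (by omega), ?_⟩
          have he : stdBasis n j + lastOnes n (n-1-j.val) = lastOnes n (n-j.val) := by
            simp only [stdBasis_ind, lastOnes_ind, ind_add]
            rw [ind_eq_ind_iff]
            intro t ht
            omega
          rw [he]
          exact lastOnes_mem (by omega) (by omega) (by omega)
        · refine ⟨lastOnes_mem (by omega) (by omega) (by omega), ?_⟩
          have he : stdBasis n j + lastOnes n (n-j.val) = lastOnes n (n-1-j.val) := by
            simp only [stdBasis_ind, lastOnes_ind, ind_add]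
            rw [ind_eq_ind_iff]
            intro t ht
            omega
          rw [he]
          exact lastOnes_mem (by omega) (by omega) (by omega)
    rw [hset]
    exact Finset.card_pair (last_ne_last (by omega) (by omega) (by omega))

lemma N2 (hn : 4 ≤ n) {k : ℕ} (hk2 : 2 ≤ k) (hkn : k ≤ n-1) : rdeg n (lastOnes n k) = 4 := by
  classical
  unfold rdeg
  have hset : (Finset.univ.filter fun s =>
      s ∈ genSet n ∧ lastOnes n k + s ∈ genSet n) =
      {lastOnes n (k-1), lastOnes n (k+1),
        stdBasis n ⟨n-k-1, by omega⟩, stdBasis n ⟨n-k, by omega⟩} := by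
    ext s
    rw [mem_rdeg_filter]
    simp only [Finset.mem_insert, Finset.mem_singleton]
    constructor
    · rintro ⟨(⟨b, rfl⟩ | ⟨l, hl2, hln, rfl⟩), hsum⟩
      · rw [add_comm] at hsum
        rw [M2 hn hk2 (by omega)] at hsum
        rcases hsum with h | h | h
        · right; right; left
          exact congrArg (stdBasis n) (Fin.ext (by simp only [Fin.val_mk]; omega))
        · right; right; right
          exact congrArg (stdBasis n) (Fin.ext (by simp only [Fin.val_mk]; omega))
        · left
          rw [stdBasis_ind, lastOnes_ind, ind_eq_ind_iff]
          intro t ht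
          omega
      · have hlk : l ≠ k := by
          intro hh
          rw [hh, addself] at hsum
          exact zero_not_mem (by omega) hsum
        rcases Nat.lt_or_ge k l with hlt | hge
        · rw [M3 hn hk2 hlt hln] at hsum
          right; left
          rw [hsum]
        · rw [add_comm, M3 hn hl2 (by omega) (by omega)] at hsum
          left
          have : l = k-1 := by omega
          rw [this]
    · rintro (rfl | rfl | rfl | rfl)
      · refine ⟨lastOnes_mem (by omega) (by omega) (by omega), ?_⟩
        have he : lastOnes n k + lastOnes n (k-1) = stdBasis n ⟨n-k, by omega⟩ := by
          simp only [stdBasis_ind, lastOnes_ind, ind_add, Fin.val_mk]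
          rw [ind_eq_ind_iff]
          intro t ht
          omega
        rw [he]
        exact stdBasis_mem _
      · refine ⟨lastOnes_mem (by omega) (by omega) (by omega), ?_⟩
        have he : lastOnes n k + lastOnes n (k+1) = stdBasis n ⟨n-k-1, by omega⟩ := by
          simp only [stdBasis_ind, lastOnes_ind, ind_add, Fin.val_mk]
          rw [ind_eq_ind_iff]
          intro t ht
          omega
        rw [he]
        exact stdBasis_mem _
      · refine ⟨stdBasis_mem _, ?_⟩
        have he : lastOnes n k + stdBasis n ⟨n-k-1, by omega⟩ = lastOnes n (k+1) := by
          simp only [stdBasis_ind, lastOnes_ind, ind_add, Fin.val_mk]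
          rw [ind_eq_ind_iff]
          intro t ht
          omega
        rw [he]
        exact lastOnes_mem (by omega) (by omega) (by omega)
      · refine ⟨stdBasis_mem _, ?_⟩
        have he : lastOnes n k + stdBasis n ⟨n-k, by omega⟩ = lastOnes n (k-1) := by
          simp only [stdBasis_ind, lastOnes_ind, ind_add, Fin.val_mk]
          rw [ind_eq_ind_iff]
          intro t ht
          omega
        rw [he]
        exact lastOnes_mem (by omega) (by omega) (by omega)
  rw [hset]
  have ne12 : lastOnes n (k-1) ≠ lastOnes n (k+1) := last_ne_last (by omega) (by omega) (by omega)
  have ne13 : lastOnes n (k-1) ≠ stdBasis n ⟨n-k-1, by omega⟩ :=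
    last_ne_std hn (by simp only [Fin.val_mk]; omega)
  have ne14 : lastOnes n (k-1) ≠ stdBasis n ⟨n-k, by omega⟩ :=
    last_ne_std hn (by simp only [Fin.val_mk]; omega)
  have ne23 : lastOnes n (k+1) ≠ stdBasis n ⟨n-k-1, by omega⟩ :=
    last_ne_std hn (by simp only [Fin.val_mk]; omega)
  have ne24 : lastOnes n (k+1) ≠ stdBasis n ⟨n-k, by omega⟩ :=
    last_ne_std hn (by simp only [Fin.val_mk]; omega)
  have ne34 : stdBasis n (⟨n-k-1, by omega⟩ : Fin n) ≠ stdBasis n ⟨n-k, by omega⟩ :=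
    std_ne_std (by simp only [Fin.val_mk]; omega)
  rw [Finset.card_insert_of_notMem (by
        simp only [Finset.mem_insert, Finset.mem_singleton]
        push_neg
        exact ⟨ne12, ne13, ne14⟩),
      Finset.card_insert_of_notMem (by
        simp only [Finset.mem_insert, Finset.mem_singleton]
        push_neg
        exact ⟨ne23, ne24⟩),
      Finset.card_insert_of_notMem (by
        simp only [Finset.mem_singleton]
        exact ne34),
      Finset.card_singleton]

lemma N3 (hn : 4 ≤ n) : rdeg n (lastOnes n n) = 2 := by
  classical
  unfold rdeg
  have hset : (Finset.univ.filter fun s =>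
      s ∈ genSet n ∧ lastOnes n n + s ∈ genSet n) =
      {lastOnes n (n-1), stdBasis n ⟨0, by omega⟩} := by
    ext s
    rw [mem_rdeg_filter, Finset.mem_insert, Finset.mem_singleton]
    constructor
    · rintro ⟨(⟨b, rfl⟩ | ⟨l, hl2, hln, rfl⟩), hsum⟩
      · rw [add_comm, M2 hn (by omega) (by omega)] at hsum
        have hb := b.isLt
        right
        refine congrArg (stdBasis n) (Fin.ext ?_)
        simp only [Fin.val_mk]
        omega
      · have hlk : l ≠ n := by
          intro hh
          rw [hh, addself] at hsum
          exact zero_not_mem (by omega) hsum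
        rw [add_comm, M3 hn hl2 (by omega) (by omega)] at hsum
        left
        have : l = n-1 := by omega
        rw [this]
    · rintro (rfl | rfl)
      · refine ⟨lastOnes_mem (by omega) (by omega) (by omega), ?_⟩
        have he : lastOnes n n + lastOnes n (n-1) = stdBasis n ⟨0, by omega⟩ := by
          simp only [stdBasis_ind, lastOnes_ind, ind_add, Fin.val_mk]
          rw [ind_eq_ind_iff]
          intro t ht
          omega
        rw [he]
        exact stdBasis_mem _
      · refine ⟨stdBasis_mem _, ?_⟩
        have he : lastOnes n n + stdBasis n ⟨0, by omega⟩ = lastOnes n (n-1) := by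
          simp only [stdBasis_ind, lastOnes_ind, ind_add, Fin.val_mk]
          rw [ind_eq_ind_iff]
          intro t ht
          omega
        rw [he]
        exact lastOnes_mem (by omega) (by omega) (by omega)
  rw [hset]
  exact Finset.card_pair (last_ne_std hn (by simp only [Fin.val_mk]; omega))

lemma N4 (hn : 4 ≤ n) {s : Fin n → ZMod 2} (hs : s ∈ genSet n) (hr : rdeg n s = 2) :
    (∃ b : Fin n, s = stdBasis n b) ∨ s = lastOnes n n := by
  rcases hs with ⟨b, rfl⟩ | ⟨k, hk2, hkn, rfl⟩
  · left; exact ⟨b, rfl⟩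
  · rcases Nat.lt_or_ge k n with hlt | hge
    · have := N2 hn hk2 (by omega)
      omega
    · right
      have : k = n := by omega
      rw [this]





lemma add_eq_zero_iff (x y : Fin n → ZMod 2) : x + y = 0 ↔ x = y := by
  constructor
  · intro h
    calc x = x + (y + y) := by rw [addself, add_zero]
      _ = (x + y) + y := by rw [add_assoc]
      _ = 0 + y := by rw [h]
      _ = y := zero_add y
  · intro h; rw [h, addself]

lemma exists_t (hn : 4 ≤ n) (a b c : ℕ) : ∃ t, t < n ∧ t ≠ a ∧ t ≠ b ∧ t ≠ c := by
  by_cases h0 : 0 ≠ a ∧ 0 ≠ b ∧ 0 ≠ c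
  · exact ⟨0, by omega, h0⟩
  by_cases h1 : 1 ≠ a ∧ 1 ≠ b ∧ 1 ≠ c
  · exact ⟨1, by omega, h1⟩
  by_cases h2 : 2 ≠ a ∧ 2 ≠ b ∧ 2 ≠ c
  · exact ⟨2, by omega, h2⟩
  by_cases h3 : 3 ≠ a ∧ 3 ≠ b ∧ 3 ≠ c
  · exact ⟨3, by omega, h3⟩
  push_neg at h0 h1 h2 h3
  exfalso
  omega

open Classical in
noncomputable def cn (n : ℕ) (a b : Fin n → ZMod 2) : ℕ :=
  (Finset.univ.filter fun u => (AQ n).Adj u a ∧ (AQ n).Adj u b).card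

lemma cn_eq_rdeg (hn : 4 ≤ n) {a b : Fin n → ZMod 2} (hab : a ≠ b) :
    cn n a b = rdeg n (a + b) := by
  classical
  unfold cn rdeg
  apply Finset.card_bij (fun u _ => u + a)
  · intro u hu
    rw [Finset.mem_filter] at hu ⊢
    obtain ⟨-, ⟨hu1, hu2⟩, ⟨hu3, hu4⟩⟩ := hu
    refine ⟨Finset.mem_univ _, hu2, ?_⟩
    have : a + b + (u + a) = (u + b) + (a + a) := by abel
    rw [this, addself, add_zero]
    exact hu4
  · intro u1 h1 u2 h2 he
    exact add_right_cancel he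
  · intro s hs
    rw [Finset.mem_filter] at hs
    obtain ⟨-, hs1, hs2⟩ := hs
    have e1 : s + a + a = s := by rw [add_assoc, addself, add_zero]
    refine ⟨s + a, ?_, e1⟩
    rw [Finset.mem_filter]
    have hsb : s + a + b = a + b + s := by abel
    refine ⟨Finset.mem_univ _, ⟨?_, by rw [e1]; exact hs1⟩, ⟨?_, by rw [hsb]; exact hs2⟩⟩
    · intro he
      rw [← add_eq_zero_iff] at he
      rw [e1] at he
      exact zero_not_mem (by omega) (he ▸ hs1)
    · intro he
      rw [← add_eq_zero_iff] at he
      rw [hsb] at he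
      exact zero_not_mem (by omega) (he ▸ hs2)

lemma cn_iso (h : AQ n ≃g AQ n) (x w : Fin n → ZMod 2) (hw : h w = w) :
    cn n x w = cn n (h x) w := by
  classical
  unfold cn
  apply Finset.card_bij (fun u _ => h u)
  · intro u hu
    rw [Finset.mem_filter] at hu ⊢
    obtain ⟨-, hu1, hu2⟩ := hu
    refine ⟨Finset.mem_univ _, h.map_adj_iff.mpr hu1, ?_⟩
    have := h.map_adj_iff.mpr hu2
    rwa [hw] at this
  · intro u1 h1 u2 h2 he
    exact h.injective he
  · intro w' hw'
    rw [Finset.mem_filter] at hw'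
    obtain ⟨-, hw1, hw2⟩ := hw'
    refine ⟨h.symm w', ?_, h.apply_symm_apply w'⟩
    rw [Finset.mem_filter]
    refine ⟨Finset.mem_univ _, ?_, ?_⟩
    · have : (AQ n).Adj (h (h.symm w')) (h x) := by rwa [h.apply_symm_apply]
      exact h.map_adj_iff.mp this
    · have : (AQ n).Adj (h (h.symm w')) (h w) := by rwa [h.apply_symm_apply, hw]
      exact h.map_adj_iff.mp this

def wt (x : Fin n → ZMod 2) : ℕ := (Finset.univ.filter fun i => x i ≠ 0).card

lemma wt_eq_zero {x : Fin n → ZMod 2} (h : wt x = 0) : x = 0 := by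
  funext i
  by_contra hi
  have : i ∈ (Finset.univ.filter fun i => x i ≠ 0) := Finset.mem_filter.mpr ⟨Finset.mem_univ _, hi⟩
  rw [Finset.card_eq_zero.mp h] at this
  exact absurd this (Finset.notMem_empty i)

lemma wt_flip {x : Fin n → ZMod 2} {j : Fin n} (hj : x j ≠ 0) :
    wt (x + stdBasis n j) < wt x := by
  have hfil : (Finset.univ.filter fun i => (x + stdBasis n j) i ≠ 0) =
      (Finset.univ.filter fun i => x i ≠ 0).erase j := by
    ext i
    rw [Finset.mem_filter, Finset.mem_erase, Finset.mem_filter]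
    simp only [Finset.mem_univ, true_and]
    by_cases hij : i = j
    · subst hij
      have hx1 : x i = 1 := by rcases zmod2 (x i) with h | h; exact absurd h hj; exact h
      simp only [Pi.add_apply, stdBasis, if_pos rfl, hx1]
      constructor
      · intro hc; exact absurd (by decide : (1 : ZMod 2) + 1 = 0) hc
      · rintro ⟨hc, -⟩; exact absurd rfl hc
    · simp only [Pi.add_apply, stdBasis, if_neg hij, add_zero]
      exact ⟨fun hh => ⟨hij, hh⟩, fun hh => hh.2⟩
  rw [wt, wt, hfil]
  exact Finset.card_erase_lt_of_mem (Finset.mem_filter.mpr ⟨Finset.mem_univ _, hj⟩)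

lemma exists_two {x : Fin n → ZMod 2} (hnz : x ≠ 0) (hns : ∀ j : Fin n, x ≠ stdBasis n j) :
    ∃ j₁ j₂ : Fin n, j₁ ≠ j₂ ∧ x j₁ ≠ 0 ∧ x j₂ ≠ 0 := by
  have hj1 : ∃ j : Fin n, x j ≠ 0 := by
    by_contra hc
    push_neg at hc
    exact hnz (funext fun i => by rw [hc i]; rfl)
  obtain ⟨j₁, hj₁⟩ := hj1
  by_contra hcon
  have hall : ∀ i, i ≠ j₁ → x i = 0 := by
    intro i hi
    by_contra hxi
    exact hcon ⟨j₁, i, Ne.symm hi, hj₁, hxi⟩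
  apply hns j₁
  funext i
  by_cases hi : i = j₁
  · subst hi
    have hx1 : x i = 1 := by rcases zmod2 (x i) with h | h; exact absurd h hj₁; exact h
    rw [hx1, stdBasis, if_pos rfl]
  · rw [hall i hi, stdBasis, if_neg hi]

theorem rigid (hn : 4 ≤ n) (h : AQ n ≃g AQ n) (h0 : h 0 = 0)
    (hS : ∀ s ∈ genSet n, h s = s) : ∀ x, h x = x := by
  suffices H : ∀ m (x : Fin n → ZMod 2), wt x ≤ m → h x = x by
    exact fun x => H (wt x) x le_rfl
  intro m
  induction m with
  | zero =>
    intro x hx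
    have hx0 : x = 0 := wt_eq_zero (Nat.le_zero.mp hx)
    rw [hx0]
    exact h0
  | succ m IH =>
    intro x hx
    by_cases hxS : x ∈ genSet n
    · exact hS x hxS
    by_cases hx0 : x = 0
    · rw [hx0]; exact h0
    by_cases hfix : h x = x
    · exact hfix
    exfalso
    set z := h x with hz
    have hzx : z ≠ x := hfix
    set d := x + z with hd
    have hd0 : d ≠ 0 := by
      intro he
      exact hzx ((add_eq_zero_iff x z).mp he).symm
    have hzxd : z = x + d := by rw [hd, ← add_assoc, addself, zero_add]
    have key : ∀ j : Fin n, x j ≠ 0 →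
        ((∃ a : Fin n, d + stdBasis n j = stdBasis n a) ∨ d + stdBasis n j = lastOnes n n) := by
      intro j hj
      set f := x + stdBasis n j with hf
      have hwf : wt f < wt x := wt_flip hj
      have hhf : h f = f := IH f (by omega)
      have hxf_sum : x + f = stdBasis n j := by rw [hf, ← add_assoc, addself, zero_add]
      have hxf : x ≠ f := by
        intro he
        rw [he, addself] at hxf_sum
        exact stdBasis_ne_zero j hxf_sum.symm
      have hAdjxf : (AQ n).Adj x f := ⟨hxf, by rw [hxf_sum]; exact stdBasis_mem j⟩
      have hAdjzf : (AQ n).Adj z f := by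
        have := h.map_adj_iff.mpr hAdjxf
        rwa [hhf] at this
      have hzf_sum : z + f = d + stdBasis n j := by
        rw [hf, hd]
        abel
      have hmem : d + stdBasis n j ∈ genSet n := by rw [← hzf_sum]; exact hAdjzf.2
      have hzf : z ≠ f := by
        intro he
        exact hxf (h.injective (by rw [← hz, he, hhf]))
      have hcn := cn_iso h x f hhf
      rw [← hz] at hcn
      rw [cn_eq_rdeg hn hxf, cn_eq_rdeg hn hzf, hxf_sum, hzf_sum] at hcn
      rw [N1 hn j] at hcn
      exact N4 hn hmem hcn.symm
    obtain ⟨j₁, j₂, hj12, hxj1, hxj2⟩ :=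
      exists_two hx0 (fun j he => hxS (he ▸ stdBasis_mem j))
    have hj12v : j₁.val ≠ j₂.val := fun hv => hj12 (Fin.ext hv)
    have unadd : ∀ (j : Fin n) (y : Fin n → ZMod 2), d + stdBasis n j = y →
        d = y + stdBasis n j := by
      intro j y he
      rw [← he, add_assoc, addself, add_zero]
    rcases key j₁ hxj1 with ⟨a₁, e1⟩ | e1 <;> rcases key j₂ hxj2 with ⟨a₂, e2⟩ | e2
    · -- both single
      have hd1 := unadd j₁ _ e1
      have hd2 := unadd j₂ _ e2
      have ha1 : a₁.val ≠ j₁.val := by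
        intro hv
        rw [Fin.ext hv, addself] at hd1
        exact hd0 hd1
      have ha2 : a₂.val ≠ j₂.val := by
        intro hv
        rw [Fin.ext hv, addself] at hd2
        exact hd0 hd2
      have heq : stdBasis n a₁ + stdBasis n j₁ = stdBasis n a₂ + stdBasis n j₂ := by
        rw [← hd1, ← hd2]
      rw [stdBasis_ind a₁, stdBasis_ind j₁, stdBasis_ind a₂, stdBasis_ind j₂,
        ind_add, ind_add, ind_eq_ind_iff] at heq
      have H1 := heq j₁.val j₁.isLt
      have H2 := heq j₂.val j₂.isLt
      have H3 := heq a₁.val a₁.isLt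
      have H4 := heq a₂.val a₂.isLt
      have hv : a₁.val = j₂.val ∧ a₂.val = j₁.val := by omega
      have hdc : d = stdBasis n j₂ + stdBasis n j₁ := by
        rw [hd1, Fin.ext hv.1]
      by_cases hxd : x = d
      · have : z = 0 := by rw [hzxd, ← hxd, addself]
        apply hx0
        apply h.injective
        rw [← hz, this, h0]
      · have hj3 : ∃ j₃, x j₃ ≠ d j₃ := by
          by_contra hc
          push_neg at hc
          exact hxd (funext hc)
        obtain ⟨j₃, hj₃⟩ := hj3
        have hd_at : ∀ i : Fin n, i.val ≠ j₁.val → i.val ≠ j₂.val → d i = 0 := by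
          intro i hi1 hi2
          have e1' : i ≠ j₂ := fun he => hi2 (congrArg Fin.val he)
          have e2' : i ≠ j₁ := fun he => hi1 (congrArg Fin.val he)
          rw [hdc]
          simp [stdBasis, e1', e2']
        have hd_j1 : d j₁ = 1 := by
          have e1' : j₁ ≠ j₂ := hj12
          rw [hdc]
          simp [stdBasis, e1']
        have hd_j2 : d j₂ = 1 := by
          have e1' : j₂ ≠ j₁ := Ne.symm hj12
          rw [hdc]
          simp [stdBasis, e1']
        have hx1 : x j₁ = 1 := by rcases zmod2 (x j₁) with hh | hh; exact absurd hh hxj1; exact hh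
        have hx2 : x j₂ = 1 := by rcases zmod2 (x j₂) with hh | hh; exact absurd hh hxj2; exact hh
        have h31 : j₃.val ≠ j₁.val := by
          intro hv
          rw [Fin.ext hv, hx1, hd_j1] at hj₃
          exact hj₃ rfl
        have h32 : j₃.val ≠ j₂.val := by
          intro hv
          rw [Fin.ext hv, hx2, hd_j2] at hj₃
          exact hj₃ rfl
        have hxj3 : x j₃ ≠ 0 := by
          intro hv
          rw [hv, hd_at j₃ h31 h32] at hj₃
          exact hj₃ rfl
        rcases key j₃ hxj3 with ⟨a₃, e3⟩ | e3
        · have hd3 := unadd j₃ _ e3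
          have ha3 : a₃.val ≠ j₃.val := by
            intro hv
            rw [Fin.ext hv, addself] at hd3
            exact hd0 hd3
          have heq3 : stdBasis n j₂ + stdBasis n j₁ = stdBasis n a₃ + stdBasis n j₃ := by
            rw [← hdc, hd3]
          rw [stdBasis_ind j₂, stdBasis_ind j₁, stdBasis_ind a₃, stdBasis_ind j₃,
            ind_add, ind_add, ind_eq_ind_iff] at heq3
          have G1 := heq3 j₁.val j₁.isLt
          have G2 := heq3 j₂.val j₂.isLt
          have G3 := heq3 j₃.val j₃.isLt
          have G4 := heq3 a₃.val a₃.isLt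
          omega
        · have hd3 := unadd j₃ _ e3
          have heq3 : stdBasis n j₂ + stdBasis n j₁ = lastOnes n n + stdBasis n j₃ := by
            rw [← hdc, hd3]
          rw [stdBasis_ind j₂, stdBasis_ind j₁, lastOnes_ind, stdBasis_ind j₃,
            ind_add, ind_add, ind_eq_ind_iff] at heq3
          obtain ⟨t, htn, ht1, ht2, ht3⟩ := exists_t hn j₁.val j₂.val j₃.val
          have G := heq3 t htn
          omega
    · -- j₁ single, j₂ lastOnes
      have hd1 := unadd j₁ _ e1
      have hd2 := unadd j₂ _ e2
      have heq : stdBasis n a₁ + stdBasis n j₁ = lastOnes n n + stdBasis n j₂ := by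
        rw [← hd1, ← hd2]
      rw [stdBasis_ind a₁, stdBasis_ind j₁, lastOnes_ind, stdBasis_ind j₂,
        ind_add, ind_add, ind_eq_ind_iff] at heq
      obtain ⟨t, htn, ht1, ht2, ht3⟩ := exists_t hn a₁.val j₁.val j₂.val
      have G := heq t htn
      omega
    · -- j₁ lastOnes, j₂ single
      have hd1 := unadd j₁ _ e1
      have hd2 := unadd j₂ _ e2
      have heq : lastOnes n n + stdBasis n j₁ = stdBasis n a₂ + stdBasis n j₂ := by
        rw [← hd1, ← hd2]
      rw [stdBasis_ind a₂, stdBasis_ind j₁, lastOnes_ind, stdBasis_ind j₂,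
        ind_add, ind_add, ind_eq_ind_iff] at heq
      obtain ⟨t, htn, ht1, ht2, ht3⟩ := exists_t hn a₂.val j₁.val j₂.val
      have G := heq t htn
      omega
    · -- both lastOnes
      have : stdBasis n j₁ = stdBasis n j₂ := add_left_cancel (e1.trans e2.symm)
      exact hj12 (stdBasis_inj this)





lemma lastOnes_succ' (hn : 4 ≤ n) {k : ℕ} (hk : k < n) :
    lastOnes n k + stdBasis n ⟨n-1-k, by omega⟩ = lastOnes n (k+1) := by
  simp only [stdBasis_ind, lastOnes_ind, ind_add, Fin.val_mk]
  rw [ind_eq_ind_iff]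
  intro t ht
  omega

noncomputable def Lmap (n : ℕ) (g : AQ n ≃g AQ n) :
    (Fin n → ZMod 2) →ₗ[ZMod 2] (Fin n → ZMod 2) where
  toFun := fun x => ∑ j : Fin n, x j • g (stdBasis n j)
  map_add' := by
    intro x y
    simp only [Pi.add_apply, add_smul]
    rw [Finset.sum_add_distrib]
  map_smul' := by
    intro c x
    simp only [Pi.smul_apply, smul_eq_mul, RingHom.id_apply, mul_smul, ← Finset.smul_sum]

lemma Lmap_basis (g : AQ n ≃g AQ n) (j : Fin n) : Lmap n g (stdBasis n j) = g (stdBasis n j) := by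
  show (∑ i : Fin n, stdBasis n j i • g (stdBasis n i)) = g (stdBasis n j)
  rw [Finset.sum_eq_single_of_mem j (Finset.mem_univ j)]
  · rw [show stdBasis n j j = 1 from if_pos rfl, one_smul]
  · intro i _ hij
    rw [show stdBasis n j i = 0 from if_neg hij, zero_smul]

lemma x_repr (x : Fin n → ZMod 2) : x = ∑ j : Fin n, x j • stdBasis n j := by
  funext i
  rw [Finset.sum_apply]
  rw [Finset.sum_eq_single_of_mem i (Finset.mem_univ i)]
  · rw [Pi.smul_apply, show stdBasis n i i = 1 from if_pos rfl, smul_eq_mul, mul_one]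
  · intro j _ hij
    rw [Pi.smul_apply, show stdBasis n j i = 0 from if_neg (Ne.symm hij), smul_zero]

theorem main_aux (hn : 4 ≤ n) (g : AQ n ≃g AQ n) (hg : g 0 = 0) :
    (∀ x y : Fin n → ZMod 2, g (x + y) = g x + g y) ∧ ⇑g '' genSet n = genSet n := by
  have gS : ∀ s ∈ genSet n, g s ∈ genSet n := by
    intro s hs
    have hadj : (AQ n).Adj 0 s := by
      refine ⟨fun he => zero_not_mem (by omega) (he ▸ hs), ?_⟩
      rw [zero_add]
      exact hs
    have := g.map_adj_iff.mpr hadj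
    rw [hg] at this
    have h2 := this.2
    rwa [zero_add] at h2
  have hgsymm0 : g.symm 0 = 0 := by
    conv_lhs => rw [← hg]
    exact g.symm_apply_apply 0
  have gS' : ∀ s ∈ genSet n, g.symm s ∈ genSet n := by
    intro s hs
    have hadj : (AQ n).Adj 0 s := by
      refine ⟨fun he => zero_not_mem (by omega) (he ▸ hs), ?_⟩
      rw [zero_add]
      exact hs
    have := g.symm.map_adj_iff.mpr hadj
    rw [hgsymm0] at this
    have h2 := this.2
    rwa [zero_add] at h2
  -- triangle additivity on the generating set
  have gtri : ∀ k : ℕ, 1 ≤ k → k < n →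
      g (lastOnes n (k+1)) = g (lastOnes n k) + g (stdBasis n ⟨n-1-k, by omega⟩) := by
    intro k h1 hk
    set a := lastOnes n k with hadef
    set b := stdBasis n (⟨n-1-k, by omega⟩ : Fin n) with hbdef
    set c := lastOnes n (k+1) with hcdef
    have hma : a ∈ genSet n := lastOnes_mem (by omega) h1 (by omega)
    have hmb : b ∈ genSet n := stdBasis_mem _
    have hmc : c ∈ genSet n := lastOnes_mem (by omega) (by omega) (by omega)
    have IA : a + b = c := lastOnes_succ' hn hk
    have IB : a + c = b := by
      rw [← IA]
      calc a + (a + b) = b + (a + a) := by abel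
        _ = b := by rw [addself, add_zero]
    have IC : b + c = a := by
      rw [← IA]
      calc b + (a + b) = a + (b + b) := by abel
        _ = a := by rw [addself, add_zero]
    have hab : a ≠ b := last_ne_std hn (by simp only [Fin.val_mk]; omega)
    have hac : a ≠ c := last_ne_last (by omega) (by omega) (by omega)
    have hbc : b ≠ c := std_ne_last hn (by simp only [Fin.val_mk]; omega)
    have adjab : (AQ n).Adj a b := ⟨hab, by rw [IA]; exact hmc⟩
    have adjac : (AQ n).Adj a c := ⟨hac, by rw [IB]; exact hmb⟩
    have adjbc : (AQ n).Adj b c := ⟨hbc, by rw [IC]; exact hma⟩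
    have gadj2 : ∀ {u v : Fin n → ZMod 2}, (AQ n).Adj u v → g u + g v ∈ genSet n :=
      fun h => (g.map_adj_iff.mpr h).2
    have hK := triK hn (gS a hma) (gS b hmb) (gS c hmc)
      (fun he => hab (g.injective he)) (fun he => hac (g.injective he))
      (fun he => hbc (g.injective he)) (gadj2 adjab) (gadj2 adjac) (gadj2 adjbc)
    have : g a + g b = g c := (add_eq_zero_iff _ _).mp hK
    rw [this]
  -- Lmap agrees with g on the generating set
  have Lbasis : ∀ j : Fin n, Lmap n g (stdBasis n j) = g (stdBasis n j) := Lmap_basis g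
  have Llast : ∀ k : ℕ, 1 ≤ k → k ≤ n → Lmap n g (lastOnes n k) = g (lastOnes n k) := by
    intro k
    induction k with
    | zero => intro h1 _; omega
    | succ k IHk =>
      intro _ hk1
      by_cases hk0 : k = 0
      · subst hk0
        rw [show (0:ℕ)+1 = 1 from rfl, lastOnes_one (by omega : 1 ≤ n)]
        exact Lbasis _
      · have h1k : 1 ≤ k := by omega
        have hkn : k < n := by omega
        have IA : lastOnes n k + stdBasis n ⟨n-1-k, by omega⟩ = lastOnes n (k+1) :=
          lastOnes_succ' hn hkn
        rw [← IA, map_add, IHk h1k (by omega), Lbasis, IA, gtri k h1k hkn]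
  have LS : ∀ s ∈ genSet n, Lmap n g s = g s := by
    rintro s (⟨j, rfl⟩ | ⟨k, hk2, hkn, rfl⟩)
    · exact Lbasis j
    · exact Llast k (by omega) hkn
  -- Lmap is bijective
  have Lsurj : Function.Surjective ⇑(Lmap n g) := by
    intro y
    refine ⟨∑ j : Fin n, y j • g.symm (stdBasis n j), ?_⟩
    rw [map_sum]
    have : ∀ j : Fin n, Lmap n g (y j • g.symm (stdBasis n j)) = y j • stdBasis n j := by
      intro j
      rw [map_smul]
      have hmem := gS' _ (stdBasis_mem j)
      rw [LS _ hmem, g.apply_symm_apply]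
    rw [Finset.sum_congr rfl (fun j _ => this j)]
    exact (x_repr y).symm
  have Linj : Function.Injective ⇑(Lmap n g) := Finite.injective_iff_surjective.mpr Lsurj
  have Lbij : Function.Bijective ⇑(Lmap n g) := ⟨Linj, Lsurj⟩
  have LmemIff : ∀ t : Fin n → ZMod 2, t ∈ genSet n ↔ Lmap n g t ∈ genSet n := by
    intro t
    constructor
    · intro ht
      rw [LS t ht]
      exact gS t ht
    · intro ht
      have hmem := gS' _ ht
      have : Lmap n g (g.symm (Lmap n g t)) = Lmap n g t := by
        rw [LS _ hmem, g.apply_symm_apply]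
      have := Linj this
      rw [← this]
      exact hmem
  -- build the graph automorphism induced by Lmap
  obtain ⟨autL, hautL⟩ : ∃ autL : AQ n ≃g AQ n, ∀ x, autL x = Lmap n g x := by
    refine ⟨⟨Equiv.ofBijective _ Lbij, ?_⟩, fun x => rfl⟩
    intro a b
    show (AQ n).Adj (Lmap n g a) (Lmap n g b) ↔ (AQ n).Adj a b
    constructor
    · rintro ⟨hne, hmem⟩
      refine ⟨fun he => hne (by rw [he]), ?_⟩
      rw [← map_add] at hmem
      exact (LmemIff _).mpr hmem
    · rintro ⟨hne, hmem⟩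
      refine ⟨fun he => hne (Linj he), ?_⟩
      rw [← map_add]
      exact (LmemIff _).mp hmem
  have hautL0 : autL.symm 0 = 0 := by
    have h00 : autL 0 = 0 := by rw [hautL, map_zero]
    conv_lhs => rw [← h00]
    exact autL.symm_apply_apply 0
  have hcomp : ∀ s ∈ genSet n, g (autL.symm s) = s := by
    intro s hs
    have h1 : autL (autL.symm s) = s := autL.apply_symm_apply s
    rw [hautL] at h1
    have h2 : autL.symm s ∈ genSet n := by
      rw [LmemIff, h1]
      exact hs
    rw [← LS _ h2]
    exact h1
  set hiso : AQ n ≃g AQ n := RelIso.trans autL.symm g with hisodef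
  have hiso_apply : ∀ x, hiso x = g (autL.symm x) := fun x => rfl
  have hiso0 : hiso 0 = 0 := by
    rw [hiso_apply, hautL0, hg]
  have hisoS : ∀ s ∈ genSet n, hiso s = s := by
    intro s hs
    rw [hiso_apply]
    exact hcomp s hs
  have hid := rigid hn hiso hiso0 hisoS
  have geqL : ∀ y, g y = Lmap n g y := by
    intro y
    have := hid (autL y)
    rw [hiso_apply, autL.symm_apply_apply] at this
    rw [this, hautL]
  constructor
  · intro x y
    rw [geqL, geqL, geqL, map_add]
  · ext t
    constructor
    · rintro ⟨s, hs, rfl⟩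
      exact gS s hs
    · intro ht
      exact ⟨g.symm t, gS' t ht, g.apply_symm_apply t⟩


end AQaux

/-- For `n ≥ 4`, `AQ_n` is a normal Cayley graph: every automorphism fixing the
zero vertex is additive (and consequently maps `S_n` onto itself). -/
theorem AQn_normal (n : ℕ) (hn : 4 ≤ n) (g : AQ n ≃g AQ n) (hg : g 0 = 0) :
    (∀ x y : Fin n → ZMod 2, g (x + y) = g x + g y) ∧ ⇑g '' genSet n = genSet n := by
  exact AQaux.main_aux hn g hg
end

section
/- The clique number of the augmented cube graph AQ_4 equals 4, and AQ_4 has exactly 12 cliques of size 4. -/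
instance AQadjDec (n : ℕ) : DecidableRel (AQ n).Adj := fun x y =>
  inferInstanceAs (Decidable (x ≠ y ∧ x + y ∈ genSet n))

/-- The vertex of `AQ_4` with bit pattern given by the binary expansion of `m`. -/
def vtx (m : ℕ) : Fin 4 → ZMod 2 := fun i => ((m >>> (3 - i.val)) : ℕ)

/-- The neighbourhood of `0` in `AQ 4`. -/
def N0 : Finset (Fin 4 → ZMod 2) := {vtx 8, vtx 4, vtx 2, vtx 1, vtx 3, vtx 7, vtx 15}

/-- The three 4-cliques of `AQ 4` containing `0`. -/
def C0 : Finset (Finset (Fin 4 → ZMod 2)) :=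
  { {vtx 0, vtx 1, vtx 2, vtx 3}, {vtx 0, vtx 3, vtx 4, vtx 7}, {vtx 0, vtx 7, vtx 8, vtx 15} }

/-- The twelve 4-cliques of `AQ 4`. -/
def E12 : Finset (Finset (Fin 4 → ZMod 2)) :=
  { {vtx 0, vtx 1, vtx 2, vtx 3}, {vtx 0, vtx 3, vtx 4, vtx 7}, {vtx 0, vtx 7, vtx 8, vtx 15},
    {vtx 1, vtx 2, vtx 5, vtx 6}, {vtx 1, vtx 6, vtx 9, vtx 14}, {vtx 2, vtx 5, vtx 10, vtx 13},
    {vtx 3, vtx 4, vtx 11, vtx 12}, {vtx 4, vtx 5, vtx 6, vtx 7}, {vtx 8, vtx 9, vtx 10, vtx 11},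
    {vtx 8, vtx 11, vtx 12, vtx 15}, {vtx 9, vtx 10, vtx 13, vtx 14}, {vtx 12, vtx 13, vtx 14, vtx 15} }

set_option maxRecDepth 10000
set_option maxHeartbeats 1600000

lemma vtx_zero : vtx 0 = 0 := by decide

lemma vtx_surj : ∀ a : Fin 4 → ZMod 2, ∃ m : Fin 16, vtx m.val = a := by decide

lemma genSet_mem : ∀ x : Fin 4 → ZMod 2, x ∈ genSet 4 ↔ x ∈ N0 := by decide

lemma add_self' (a : Fin 4 → ZMod 2) : a + a = 0 := by
  funext i
  have : ∀ z : ZMod 2, z + z = 0 := by decide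
  exact this (a i)

lemma translateAQ {n : ℕ} {t : Finset (Fin 4 → ZMod 2)} (a : Fin 4 → ZMod 2)
    (h : (AQ 4).IsNClique n t) : (AQ 4).IsNClique n (t.image (· + a)) := by
  constructor
  · rintro x hx y hy hxy
    rw [Finset.coe_image] at hx hy
    obtain ⟨u, hu, rfl⟩ := hx
    obtain ⟨v, hv, rfl⟩ := hy
    have huv : u ≠ v := fun e => hxy (by rw [e])
    have hadj := h.isClique hu hv huv
    refine ⟨hxy, ?_⟩
    have : u + a + (v + a) = u + v := by
      rw [add_add_add_comm, add_self', add_zero]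
    rw [this]
    exact hadj.2
  · rw [Finset.card_image_of_injective _ (add_left_injective a), h.card_eq]

lemma clique_sub {t : Finset (Fin 4 → ZMod 2)} (h : (AQ 4).IsClique t) (h0 : vtx 0 ∈ t) :
    ∀ x ∈ t, x ∈ insert (vtx 0) N0 := by
  intro x hx
  by_cases hx0 : x = vtx 0
  · exact hx0 ▸ Finset.mem_insert_self _ _
  · have hadj := h h0 hx (fun e => hx0 e.symm)
    have : vtx 0 + x ∈ genSet 4 := hadj.2
    rw [vtx_zero, zero_add] at this
    exact Finset.mem_insert_of_mem ((genSet_mem x).1 this)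

lemma key4 : ∀ x ∈ N0, ∀ y ∈ N0, ∀ z ∈ N0,
    (AQ 4).IsNClique 4 {vtx 0, x, y, z} → ({vtx 0, x, y, z} : Finset _) ∈ C0 := by decide

lemma clique4_zero {t : Finset (Fin 4 → ZMod 2)} (h : (AQ 4).IsNClique 4 t)
    (h0 : vtx 0 ∈ t) : t ∈ C0 := by
  have hcard : (t.erase (vtx 0)).card = 3 := by
    rw [Finset.card_erase_of_mem h0, h.card_eq]
  obtain ⟨x, y, z, _, _, _, he⟩ := Finset.card_eq_three.1 hcard
  have ht : t = {vtx 0, x, y, z} := by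
    rw [← Finset.insert_erase h0, he]
  have hmem : ∀ w ∈ t.erase (vtx 0), w ∈ N0 := by
    intro w hw
    have := clique_sub h.isClique h0 w (Finset.mem_of_mem_erase hw)
    rcases Finset.mem_insert.1 this with h' | h'
    · exact absurd h' (Finset.ne_of_mem_erase hw)
    · exact h'
  have hx : x ∈ N0 := hmem x (he ▸ by simp)
  have hy : y ∈ N0 := hmem y (he ▸ by simp)
  have hz : z ∈ N0 := hmem z (he ▸ by simp)
  rw [ht] at h ⊢
  exact key4 x hx y hy z hz h

lemma no5a : ∀ x : Fin 4 → ZMod 2, ¬ (AQ 4).IsNClique 5 (insert x {vtx 0, vtx 1, vtx 2, vtx 3}) := by decide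
lemma no5b : ∀ x : Fin 4 → ZMod 2, ¬ (AQ 4).IsNClique 5 (insert x {vtx 0, vtx 3, vtx 4, vtx 7}) := by decide
lemma no5c : ∀ x : Fin 4 → ZMod 2, ¬ (AQ 4).IsNClique 5 (insert x {vtx 0, vtx 7, vtx 8, vtx 15}) := by decide

lemma no5 (t : Finset (Fin 4 → ZMod 2)) : ¬ (AQ 4).IsNClique 5 t := by
  intro h
  have hne : t.Nonempty := Finset.card_pos.1 (by rw [h.card_eq]; norm_num)
  obtain ⟨a, ha⟩ := hne
  set t' := t.image (· + a) with ht'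
  have h5 : (AQ 4).IsNClique 5 t' := translateAQ a h
  have h0 : vtx 0 ∈ t' := by
    rw [vtx_zero, ht', Finset.mem_image]
    exact ⟨a, ha, add_self' a⟩
  obtain ⟨u, hu0, hut, hucard⟩ :=
    Finset.exists_subsuperset_card_eq (n := 4) (Finset.singleton_subset_iff.2 h0)
      (by simp) (by rw [h5.card_eq]; norm_num)
  have hu4 : (AQ 4).IsNClique 4 u := ⟨h5.isClique.subset (by exact_mod_cast hut), hucard⟩
  have huC0 : u ∈ C0 := clique4_zero hu4 (Finset.singleton_subset_iff.1 hu0)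
  have hune : u ≠ t' := fun e => by rw [e, h5.card_eq] at hucard; norm_num at hucard
  obtain ⟨x, hxt, hxu⟩ := Finset.exists_of_ssubset (lt_of_le_of_ne hut hune)
  have hins : insert x u = t' := by
    apply Finset.eq_of_subset_of_card_le
    · exact Finset.insert_subset hxt hut
    · rw [h5.card_eq, Finset.card_insert_of_notMem hxu, hucard]
  have h5' : (AQ 4).IsNClique 5 (insert x u) := hins ▸ h5
  fin_cases huC0
  · exact no5a x h5'
  · exact no5b x h5'
  · exact no5c x h5'

lemma imgA : ∀ m : Fin 16, ({vtx 0, vtx 1, vtx 2, vtx 3} : Finset (Fin 4 → ZMod 2)).image (· + vtx m.val) ∈ E12 := by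
  intro m; fin_cases m <;> decide
lemma imgB : ∀ m : Fin 16, ({vtx 0, vtx 3, vtx 4, vtx 7} : Finset (Fin 4 → ZMod 2)).image (· + vtx m.val) ∈ E12 := by
  intro m; fin_cases m <;> decide
lemma imgC : ∀ m : Fin 16, ({vtx 0, vtx 7, vtx 8, vtx 15} : Finset (Fin 4 → ZMod 2)).image (· + vtx m.val) ∈ E12 := by
  intro m; fin_cases m <;> decide

lemma E12_cliques : ∀ t ∈ E12, (AQ 4).IsNClique 4 t := by
  intro t ht; fin_cases ht <;> decide

lemma clique_set_eq : {t : Finset (Fin 4 → ZMod 2) | (AQ 4).IsNClique 4 t} = ↑E12 := by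
  ext t
  simp only [Set.mem_setOf_eq, Finset.coe_sort_coe, Finset.mem_coe]
  constructor
  · intro h
    have hne : t.Nonempty := Finset.card_pos.1 (by rw [h.card_eq]; norm_num)
    obtain ⟨a, ha⟩ := hne
    obtain ⟨m, rfl⟩ := vtx_surj a
    set t' := t.image (· + vtx m.val) with ht'
    have h4 : (AQ 4).IsNClique 4 t' := translateAQ _ h
    have h0 : vtx 0 ∈ t' := by
      rw [vtx_zero, ht', Finset.mem_image]
      exact ⟨_, ha, add_self' _⟩
    have htC0 : t' ∈ C0 := clique4_zero h4 h0
    have hback : t'.image (· + vtx m.val) = t := by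
      rw [ht', Finset.image_image]
      have : ((· + vtx m.val) ∘ (· + vtx m.val)) = id := by
        funext x
        simp only [Function.comp_apply, id_eq]
        rw [add_assoc, add_self', add_zero]
      rw [this, Finset.image_id]
    rw [← hback]
    simp only [C0, Finset.mem_insert, Finset.mem_singleton] at htC0
    rcases htC0 with h' | h' | h' <;> rw [h']
    · exact imgA m
    · exact imgB m
    · exact imgC m
  · exact E12_cliques t

/-- The clique number of `AQ_4` is 4, and `AQ_4` has exactly 12 cliques of size 4. -/
theorem AQ4_cliqueNum_and_count :
    (AQ 4).cliqueNum = 4 ∧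
      {t : Finset (Fin 4 → ZMod 2) | (AQ 4).IsNClique 4 t}.ncard = 12 := by
  constructor
  · have hT : (AQ 4).IsNClique 4 ({vtx 0, vtx 1, vtx 2, vtx 3} : Finset _) := by decide
    apply le_antisymm
    · by_contra hlt
      push_neg at hlt
      obtain ⟨s, hs⟩ := (AQ 4).exists_isNClique_cliqueNum
      obtain ⟨u, hus, hucard⟩ := Finset.exists_subset_card_eq (n := 5)
        (by rw [hs.card_eq]; omega)
      exact no5 u ⟨hs.isClique.subset (by exact_mod_cast hus), hucard⟩
    · have := @SimpleGraph.IsClique.card_le_cliqueNum _ (AQ 4) _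
        ({vtx 0, vtx 1, vtx 2, vtx 3} : Finset _) hT.isClique
      rwa [hT.card_eq] at this
  · rw [clique_set_eq, Set.ncard_coe_finset]
    decide
end

section
/- If an automorphism g of the augmented cube graph AQ_4 maps each of the four cosets of U = {0000, 0010, 0001, 0011} onto itself and maps each of the four cosets of L = {0000, 1000, 0111, 1111} onto itself, then g is the identity. In other words, Aut(AQ_4) acts faithfully on these eight 4-cliques. -/
/-- The subgroup (upper clique) `U = {0000, 0010, 0001, 0011}` of `𝔽₂⁴`. -/
def U : Set (Fin 4 → ZMod 2) := {![0,0,0,0], ![0,0,1,0], ![0,0,0,1], ![0,0,1,1]}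

/-- The subgroup (lower clique) `L = {0000, 1000, 0111, 1111}` of `𝔽₂⁴`. -/
def L : Set (Fin 4 → ZMod 2) := {![0,0,0,0], ![1,0,0,0], ![0,1,1,1], ![1,1,1,1]}

/-- The subgroup (middle clique) `M = {0000, 0100, 0011, 0111}` of `𝔽₂⁴`. -/
def M : Set (Fin 4 → ZMod 2) := {![0,0,0,0], ![0,1,0,0], ![0,0,1,1], ![0,1,1,1]}

/-- The coset `K + z`. -/
def coset (K : Set (Fin 4 → ZMod 2)) (z : Fin 4 → ZMod 2) : Set (Fin 4 → ZMod 2) :=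
  (fun x => x + z) '' K

/-- If an automorphism of `AQ_4` maps each coset of `U` onto itself and each
coset of `L` onto itself, it is the identity: `Aut(AQ_4)` acts faithfully on
these eight 4-cliques. -/
theorem AQ4_faithful_on_cliques (g : AQ 4 ≃g AQ 4)
    (hU : ∀ z : Fin 4 → ZMod 2, ⇑g '' coset U z = coset U z)
    (hL : ∀ z : Fin 4 → ZMod 2, ⇑g '' coset L z = coset L z) :
    g = 1 := by
  have key : ∀ z : Fin 4 → ZMod 2, g z = z := by
    intro z
    have hzU : z ∈ coset U z := ⟨![0,0,0,0], by left; rfl, by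
      show ![0,0,0,0] + z = z
      have h0 : (![0,0,0,0] : Fin 4 → ZMod 2) = 0 := by decide
      rw [h0, zero_add]⟩
    have hzL : z ∈ coset L z := ⟨![0,0,0,0], by left; rfl, by
      show ![0,0,0,0] + z = z
      have h0 : (![0,0,0,0] : Fin 4 → ZMod 2) = 0 := by decide
      rw [h0, zero_add]⟩
    have hgU : g z ∈ coset U z := (hU z) ▸ Set.mem_image_of_mem _ hzU
    have hgL : g z ∈ coset L z := (hL z) ▸ Set.mem_image_of_mem _ hzL
    obtain ⟨u, hu, hu2⟩ := hgU
    obtain ⟨l, hl, hl2⟩ := hgL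
    have hul : u = l := by
      have : u + z = l + z := hu2.trans hl2.symm
      exact add_right_cancel this
    have hu0 : u = 0 := by
      subst hul
      simp only [U, L, Set.mem_insert_iff, Set.mem_singleton_iff] at hu hl
      rcases hu with h|h|h|h <;> rcases hl with h'|h'|h'|h' <;>
        (subst h; first | decide | (exfalso; exact absurd h' (by decide)))
    have : u + z = g z := hu2
    rw [← this, hu0, zero_add]
  ext v : 1
  exact key v
end

section
/- For every n ≥ 4, the clique number of the augmented cube graph AQ_n equals 4, and AQ_n has exactly (n − 1)·2^(n−2) cliques of size 4. -/
lemma zmod2_cases (z : ZMod 2) : z = 0 ∨ z = 1 := by revert z; decide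

lemma addself (x : Fin n → ZMod 2) : x + x = 0 := by
  funext i
  exact CharTwo.add_self_eq_zero _

lemma stdBasis_apply (n : ℕ) (j i : Fin n) : stdBasis n j i = if i.val = j.val then 1 else 0 := by
  simp [stdBasis, Fin.ext_iff]

lemma lastOnes_one (hn : 1 ≤ n) : lastOnes n 1 = stdBasis n ⟨n-1, by omega⟩ := by
  funext i
  have := i.isLt
  simp only [lastOnes, stdBasis, Fin.ext_iff, Fin.val_mk]
  split_ifs <;> first | decide | (exfalso; omega)

lemma lastOnes_add_succ {n k : ℕ} (hk : k + 1 ≤ n) :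
    lastOnes n k + lastOnes n (k+1) = stdBasis n ⟨n-k-1, by omega⟩ := by
  funext i
  have := i.isLt
  simp only [lastOnes, stdBasis, Pi.add_apply, Fin.ext_iff, Fin.val_mk]
  split_ifs <;> first | decide | (exfalso; omega)

lemma lastOnes_inj {n k l : ℕ} (hk : k ≤ n) (hl : l ≤ n) (h : lastOnes n k = lastOnes n l) :
    k = l := by
  by_contra hne
  rcases Nat.lt_or_ge k l with hlt | hge
  · have h1 := congrFun h ⟨n - l, by omega⟩
    simp only [lastOnes] at h1
    split_ifs at h1 <;> first | exact absurd h1 (by decide) | omega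
  · have hlt : l < k := by omega
    have h1 := congrFun h ⟨n - k, by omega⟩
    simp only [lastOnes] at h1
    split_ifs at h1 <;> first | exact absurd h1 (by decide) | omega

lemma lastOnes_ne_stdBasis {n k : ℕ} (h2 : 2 ≤ k) (hk : k ≤ n) (j : Fin n) :
    lastOnes n k ≠ stdBasis n j := by
  intro h
  have h1 := congrFun h ⟨n - 1, by omega⟩
  have h2' := congrFun h ⟨n - 2, by omega⟩
  simp only [lastOnes, stdBasis, Fin.ext_iff, Fin.val_mk] at h1 h2'
  split_ifs at h1 h2' <;> first | exact absurd h1 (by decide) | exact absurd h2' (by decide) | omega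

lemma ite_xor {P Q R : Prop} [Decidable P] [Decidable Q] [Decidable R]
    (h : (if P then (1 : ZMod 2) else 0) + (if Q then 1 else 0) = if R then 1 else 0) :
    R ↔ (P ↔ ¬Q) := by
  split_ifs at h <;> first | tauto | exact absurd h (by decide)

lemma lastOnes_mem_genSet {n k : ℕ} (h1 : 1 ≤ k) (hk : k ≤ n) : lastOnes n k ∈ genSet n := by
  rcases Nat.lt_or_ge k 2 with h | h
  · have : k = 1 := by omega
    subst this
    rw [lastOnes_one (by omega)]
    exact Or.inl ⟨_, rfl⟩
  · exact Or.inr ⟨k, h, hk, rfl⟩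

lemma stdBasis_mem_genSet {n : ℕ} (j : Fin n) : stdBasis n j ∈ genSet n := Or.inl ⟨j, rfl⟩

lemma sum_EE {n : ℕ} (hn : 4 ≤ n) {i j : Fin n} (hij : i ≠ j)
    (h : stdBasis n i + stdBasis n j ∈ genSet n) :
    (i.val = n-2 ∧ j.val = n-1) ∨ (i.val = n-1 ∧ j.val = n-2) := by
  have hij' : i.val ≠ j.val := fun hv => hij (Fin.ext hv)
  have hi := i.isLt
  have hj := j.isLt
  rcases h with ⟨m, hm⟩ | ⟨k, h2k, hkn, hke⟩
  · have hm1 := congrFun hm i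
    have hm2 := congrFun hm j
    simp only [stdBasis_apply, Pi.add_apply] at hm1 hm2
    have ha := ite_xor hm1
    have hb := ite_xor hm2
    simp only [true_iff, iff_true, false_iff, iff_false, not_true, not_false_iff, not_not] at ha hb
    omega
  · have hm1 := congrFun hke (⟨n-1, by omega⟩ : Fin n)
    have hm2 := congrFun hke (⟨n-2, by omega⟩ : Fin n)
    have hm3 := congrFun hke i
    have hm4 := congrFun hke j
    simp only [stdBasis_apply, lastOnes, Pi.add_apply, Fin.val_mk] at hm1 hm2 hm3 hm4
    have ha := ite_xor hm1
    have hb := ite_xor hm2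
    have hc := ite_xor hm3
    have hd := ite_xor hm4
    try simp only [true_iff, iff_true, false_iff, iff_false, not_true, not_false_iff, not_not] at ha hb hc hd
    omega

lemma sum_EV {n k : ℕ} (hn : 4 ≤ n) {j : Fin n} (h2k : 2 ≤ k) (hkn : k ≤ n)
    (h : stdBasis n j + lastOnes n k ∈ genSet n) :
    j.val = n-k-1 ∨ j.val = n-k ∨ (k = 2 ∧ j.val = n-1) := by
  have hj := j.isLt
  rcases h with ⟨m, hm⟩ | ⟨m, h2m, hmn, hme⟩
  · have hmlt := m.isLt
    have hm1 := congrFun hm j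
    have hm2 := congrFun hm m
    have hm3 := congrFun hm (⟨n-1, by omega⟩ : Fin n)
    have hm4 := congrFun hm (⟨n-2, by omega⟩ : Fin n)
    have hm5 := congrFun hm (⟨n-3, by omega⟩ : Fin n)
    simp only [stdBasis_apply, lastOnes, Pi.add_apply, Fin.val_mk] at hm1 hm2 hm3 hm4 hm5
    have ha := ite_xor hm1
    have hb := ite_xor hm2
    have hc := ite_xor hm3
    have hd := ite_xor hm4
    have he := ite_xor hm5
    try simp only [true_iff, iff_true, false_iff, iff_false, not_true, not_false_iff, not_not] at ha hb hc hd he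
    omega
  · have hm1 := congrFun hme j
    have hm2 := congrFun hme (⟨n-k, by omega⟩ : Fin n)
    have hm3 := congrFun hme (⟨n-k+1, by omega⟩ : Fin n)
    have hm4 := congrFun hme (⟨n-m, by omega⟩ : Fin n)
    have hm5 := congrFun hme (⟨n-m+1, by omega⟩ : Fin n)
    simp only [stdBasis_apply, lastOnes, Pi.add_apply, Fin.val_mk] at hm1 hm2 hm3 hm4 hm5
    have ha := ite_xor hm1
    have hb := ite_xor hm2
    have hc := ite_xor hm3
    have hd := ite_xor hm4
    have he := ite_xor hm5
    try simp only [true_iff, iff_true, false_iff, iff_false, not_true, not_false_iff, not_not] at ha hb hc hd he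
    omega

lemma sum_VV {n k l : ℕ} (hn : 4 ≤ n) (h2k : 2 ≤ k) (hkn : k ≤ n) (h2l : 2 ≤ l) (hln : l ≤ n)
    (hkl : k ≠ l) (h : lastOnes n k + lastOnes n l ∈ genSet n) :
    l = k + 1 ∨ k = l + 1 := by
  rcases h with ⟨m, hm⟩ | ⟨m, h2m, hmn, hme⟩
  · have hmlt := m.isLt
    have hm1 := congrFun hm m
    have hm2 := congrFun hm (⟨n-k, by omega⟩ : Fin n)
    have hm3 := congrFun hm (⟨n-k+1, by omega⟩ : Fin n)
    have hm4 := congrFun hm (⟨n-l, by omega⟩ : Fin n)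
    have hm5 := congrFun hm (⟨n-l+1, by omega⟩ : Fin n)
    simp only [stdBasis_apply, lastOnes, Pi.add_apply, Fin.val_mk] at hm1 hm2 hm3 hm4 hm5
    have ha := ite_xor hm1
    have hb := ite_xor hm2
    have hc := ite_xor hm3
    have hd := ite_xor hm4
    have he := ite_xor hm5
    try simp only [true_iff, iff_true, false_iff, iff_false, not_true, not_false_iff, not_not] at ha hb hc hd he
    omega
  · have hm1 := congrFun hme (⟨n-1, by omega⟩ : Fin n)
    simp only [lastOnes, Pi.add_apply, Fin.val_mk] at hm1
    have ha := ite_xor hm1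
    try simp only [true_iff, iff_true, false_iff, iff_false, not_true, not_false_iff, not_not] at ha
    omega

lemma perm_bca {α : Type*} [DecidableEq α] (a b c : α) :
    ({a, b, c} : Finset α) = {b, c, a} := by
  ext x; simp only [Finset.mem_insert, Finset.mem_singleton]; tauto

lemma perm_acb {α : Type*} [DecidableEq α] (a b c : α) :
    ({a, b, c} : Finset α) = {a, c, b} := by
  ext x; simp only [Finset.mem_insert, Finset.mem_singleton]; tauto

lemma perm_cba {α : Type*} [DecidableEq α] (a b c : α) :
    ({a, b, c} : Finset α) = {c, b, a} := by
  ext x; simp only [Finset.mem_insert, Finset.mem_singleton]; tauto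

lemma aux_EEV {n : ℕ} (hn : 4 ≤ n) {i j : Fin n} {k : ℕ} (h2k : 2 ≤ k) (hkn : k ≤ n)
    (hij : i ≠ j)
    (s1 : stdBasis n i + stdBasis n j ∈ genSet n)
    (s2 : stdBasis n i + lastOnes n k ∈ genSet n)
    (s3 : stdBasis n j + lastOnes n k ∈ genSet n) :
    ∃ K, 1 ≤ K ∧ K + 1 ≤ n ∧ ({stdBasis n i, stdBasis n j, lastOnes n k} : Finset _) =
      {lastOnes n K, lastOnes n (K+1), lastOnes n K + lastOnes n (K+1)} := by
  have h1 := sum_EE hn hij s1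
  have h2 := sum_EV hn h2k hkn s2
  have h3 := sum_EV hn h2k hkn s3
  have hi := i.isLt
  have hj := j.isLt
  have hk2 : k = 2 := by omega
  subst hk2
  refine ⟨1, le_refl 1, by omega, ?_⟩
  have e2 : lastOnes n 1 + lastOnes n (1+1) = stdBasis n ⟨n-1-1, by omega⟩ :=
    lastOnes_add_succ (by omega)
  have e1 : lastOnes n 1 = stdBasis n ⟨n-1, by omega⟩ := lastOnes_one (by omega)
  have h21 : lastOnes n (1+1) = lastOnes n 2 := rfl
  rw [e2, e1, h21]
  rcases h1 with ⟨hiv, hjv⟩ | ⟨hiv, hjv⟩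
  · have ei : i = (⟨n-1-1, by omega⟩ : Fin n) := Fin.ext (by simp only [Fin.val_mk]; omega)
    have ej : j = (⟨n-1, by omega⟩ : Fin n) := Fin.ext (by simp only [Fin.val_mk]; omega)
    rw [ei, ej]
    exact perm_bca _ _ _
  · have ei : i = (⟨n-1, by omega⟩ : Fin n) := Fin.ext (by simp only [Fin.val_mk]; omega)
    have ej : j = (⟨n-1-1, by omega⟩ : Fin n) := Fin.ext (by simp only [Fin.val_mk]; omega)
    rw [ei, ej]
    exact perm_acb _ _ _

lemma aux_EVV {n : ℕ} (hn : 4 ≤ n) {j : Fin n} {k l : ℕ} (h2k : 2 ≤ k) (hkn : k ≤ n)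
    (h2l : 2 ≤ l) (hln : l ≤ n) (hkl : k ≠ l)
    (s1 : stdBasis n j + lastOnes n k ∈ genSet n)
    (s2 : stdBasis n j + lastOnes n l ∈ genSet n)
    (s3 : lastOnes n k + lastOnes n l ∈ genSet n) :
    ∃ K, 1 ≤ K ∧ K + 1 ≤ n ∧ ({stdBasis n j, lastOnes n k, lastOnes n l} : Finset _) =
      {lastOnes n K, lastOnes n (K+1), lastOnes n K + lastOnes n (K+1)} := by
  have h1 := sum_EV hn h2k hkn s1
  have h2 := sum_EV hn h2l hln s2
  have h3 := sum_VV hn h2k hkn h2l hln hkl s3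
  have hj := j.isLt
  rcases h3 with rfl | rfl
  · -- l = k + 1
    have hjv : j.val = n - k - 1 := by omega
    refine ⟨k, by omega, by omega, ?_⟩
    have ej : stdBasis n j = lastOnes n k + lastOnes n (k+1) := by
      rw [lastOnes_add_succ (by omega)]
      exact congrArg (stdBasis n) (Fin.ext (by simp only [Fin.val_mk]; omega))
    rw [ej]
    exact perm_bca _ _ _
  · -- k = l + 1
    have hjv : j.val = n - l - 1 := by omega
    refine ⟨l, by omega, by omega, ?_⟩
    have ej : stdBasis n j = lastOnes n l + lastOnes n (l+1) := by
      rw [lastOnes_add_succ (by omega)]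
      exact congrArg (stdBasis n) (Fin.ext (by simp only [Fin.val_mk]; omega))
    rw [ej]
    exact perm_cba _ _ _

lemma perm_bac {α : Type*} [DecidableEq α] (a b c : α) :
    ({a, b, c} : Finset α) = {b, a, c} := by
  ext x; simp only [Finset.mem_insert, Finset.mem_singleton]; tauto

lemma perm_cab {α : Type*} [DecidableEq α] (a b c : α) :
    ({a, b, c} : Finset α) = {c, a, b} := by
  ext x; simp only [Finset.mem_insert, Finset.mem_singleton]; tauto

lemma triple_classify {n : ℕ} (hn : 4 ≤ n) {p q r : Fin n → ZMod 2}
    (hp : p ∈ genSet n) (hq : q ∈ genSet n) (hr : r ∈ genSet n)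
    (hpq : p ≠ q) (hpr : p ≠ r) (hqr : q ≠ r)
    (spq : p + q ∈ genSet n) (spr : p + r ∈ genSet n) (sqr : q + r ∈ genSet n) :
    ∃ K, 1 ≤ K ∧ K + 1 ≤ n ∧ ({p, q, r} : Finset (Fin n → ZMod 2)) =
      {lastOnes n K, lastOnes n (K+1), lastOnes n K + lastOnes n (K+1)} := by
  rcases hp with ⟨i, rfl⟩ | ⟨k, h2k, hkn, rfl⟩
  · rcases hq with ⟨j, rfl⟩ | ⟨l, h2l, hln, rfl⟩
    · rcases hr with ⟨m, rfl⟩ | ⟨o, h2o, hon, rfl⟩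
      · -- EEE : impossible
        exfalso
        have hij : i.val ≠ j.val := fun h => hpq (congrArg _ (Fin.ext h))
        have him : i.val ≠ m.val := fun h => hpr (congrArg _ (Fin.ext h))
        have hjm : j.val ≠ m.val := fun h => hqr (congrArg _ (Fin.ext h))
        have h1 := sum_EE hn (fun h => hpq (congrArg _ h)) spq
        have h2 := sum_EE hn (fun h => hpr (congrArg _ h)) spr
        have h3 := sum_EE hn (fun h => hqr (congrArg _ h)) sqr
        omega
      · -- E E V
        obtain ⟨K, h1, h2, hset⟩ := aux_EEV hn h2o hon
          (fun h => hpq (congrArg _ h)) spq spr sqr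
        exact ⟨K, h1, h2, hset⟩
    · rcases hr with ⟨m, rfl⟩ | ⟨o, h2o, hon, rfl⟩
      · -- E V E
        obtain ⟨K, h1, h2, hset⟩ := aux_EEV hn h2l hln
          (fun h => hpr (congrArg _ h)) spr spq (by rwa [add_comm] at sqr)
        exact ⟨K, h1, h2, (perm_acb _ _ _).trans hset⟩
      · -- E V V
        obtain ⟨K, h1, h2, hset⟩ := aux_EVV hn h2l hln h2o hon
          (fun h => hqr (by rw [h])) spq spr sqr
        exact ⟨K, h1, h2, hset⟩
  · rcases hq with ⟨j, rfl⟩ | ⟨l, h2l, hln, rfl⟩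
    · rcases hr with ⟨m, rfl⟩ | ⟨o, h2o, hon, rfl⟩
      · -- V E E
        obtain ⟨K, h1, h2, hset⟩ := aux_EEV hn h2k hkn
          (fun h => hqr (congrArg _ h)) sqr (by rwa [add_comm] at spq)
          (by rwa [add_comm] at spr)
        exact ⟨K, h1, h2, (perm_bca _ _ _).trans hset⟩
      · -- V E V
        obtain ⟨K, h1, h2, hset⟩ := aux_EVV hn h2k hkn h2o hon
          (fun h => hpr (by rw [h])) (by rwa [add_comm] at spq) sqr spr
        exact ⟨K, h1, h2, (perm_bac _ _ _).trans hset⟩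
    · rcases hr with ⟨m, rfl⟩ | ⟨o, h2o, hon, rfl⟩
      · -- V V E
        obtain ⟨K, h1, h2, hset⟩ := aux_EVV hn h2k hkn h2l hln
          (fun h => hpq (by rw [h])) (by rwa [add_comm] at spr)
          (by rwa [add_comm] at sqr) spq
        exact ⟨K, h1, h2, (perm_cab _ _ _).trans hset⟩
      · -- V V V : impossible
        exfalso
        have hkl : k ≠ l := fun h => hpq (by rw [h])
        have hko : k ≠ o := fun h => hpr (by rw [h])
        have hlo : l ≠ o := fun h => hqr (by rw [h])
        have h1 := sum_VV hn h2k hkn h2l hln hkl spq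
        have h2 := sum_VV hn h2k hkn h2o hon hko spr
        have h3 := sum_VV hn h2l hln h2o hon hlo sqr
        omega

lemma lastOnes_ne_zero {n k : ℕ} (h1 : 1 ≤ k) (hk : k ≤ n) : lastOnes n k ≠ 0 := by
  intro h
  have h2 := congrFun h (⟨n-1, by omega⟩ : Fin n)
  simp only [lastOnes, Pi.zero_apply, Fin.val_mk] at h2
  split_ifs at h2
  · exact absurd h2 (by decide)
  · omega

lemma stdBasis_ne_zero {n : ℕ} (j : Fin n) : stdBasis n j ≠ 0 := by
  intro h
  have h2 := congrFun h j
  simp only [stdBasis, if_pos rfl, Pi.zero_apply] at h2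
  exact absurd h2 (by decide)

lemma red1 {n : ℕ} (x p q : Fin n → ZMod 2) : (x + p) + (x + q) = p + q := by
  rw [add_add_add_comm, addself, zero_add]

lemma red2 {n : ℕ} (x p : Fin n → ZMod 2) : x + (x + p) = p := by
  rw [← add_assoc, addself, zero_add]

lemma red3 {n : ℕ} (x p : Fin n → ZMod 2) : (x + p) + x = p := by
  rw [add_comm, red2]

lemma red5 {n : ℕ} (a b : Fin n → ZMod 2) : b + (a + b) = a := by
  rw [add_comm a b, red2]

lemma red6 {n : ℕ} (a b : Fin n → ZMod 2) : (a + b) + a = b := by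
  rw [add_comm, red2]

lemma red7 {n : ℕ} (a b : Fin n → ZMod 2) : (a + b) + b = a := by
  rw [add_comm a b, red6]

def cliq (n k : ℕ) (x : Fin n → ZMod 2) : Finset (Fin n → ZMod 2) :=
  {x, x + lastOnes n k, x + lastOnes n (k+1), x + (lastOnes n k + lastOnes n (k+1))}

lemma isNClique_cliq {n k : ℕ} (hn : 4 ≤ n) (hk1 : 1 ≤ k) (hk : k + 1 ≤ n)
    (x : Fin n → ZMod 2) : (AQ n).IsNClique 4 (cliq n k x) := by
  set a := lastOnes n k with ha_def
  set b := lastOnes n (k+1) with hb_def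
  have ha0 : a ≠ 0 := lastOnes_ne_zero (by omega) (by omega)
  have hb0 : b ≠ 0 := lastOnes_ne_zero (by omega) (by omega)
  have hab0 : a + b ≠ 0 := by
    rw [ha_def, hb_def, lastOnes_add_succ hk]
    exact stdBasis_ne_zero _
  have hab : a ≠ b := by
    intro h
    have := lastOnes_inj (by omega) (by omega) h
    omega
  constructor
  · intro u hu v hv huv
    simp only [cliq, Finset.coe_insert, Set.mem_insert_iff, Finset.coe_singleton,
      Set.mem_singleton_iff] at hu hv
    rcases hu with rfl | rfl | rfl | rfl <;> rcases hv with rfl | rfl | rfl | rfl <;>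
      first
        | exact absurd rfl huv
        | (refine (⟨huv, ?_⟩ : _ ∧ _)
           simp only [red1, red2, red3, red5, red6, red7]
           first
             | exact lastOnes_mem_genSet (by omega) (by omega)
             | (rw [lastOnes_add_succ (by omega)]; exact stdBasis_mem_genSet _)
             | (rw [add_comm, lastOnes_add_succ (by omega)]; exact stdBasis_mem_genSet _))
  · show (cliq n k x).card = 4
    rw [cliq, Finset.card_insert_of_notMem (by
        simp only [Finset.mem_insert, Finset.mem_singleton]
        push_neg
        refine ⟨fun h => ha0 (left_eq_add.mp h),
          fun h => hb0 (left_eq_add.mp h),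
          fun h => hab0 (left_eq_add.mp h)⟩),
      Finset.card_insert_of_notMem (by
        simp only [Finset.mem_insert, Finset.mem_singleton]
        push_neg
        refine ⟨fun h => hab ((add_right_inj x).mp h),
          fun h => hb0 (left_eq_add.mp ((add_right_inj x).mp h))⟩),
      Finset.card_insert_of_notMem (by
        simp only [Finset.mem_singleton]
        exact fun h => ha0 (right_eq_add.mp ((add_right_inj x).mp h))),
      Finset.card_singleton]

lemma clique_eq {n : ℕ} (hn : 4 ≤ n) {t : Finset (Fin n → ZMod 2)}
    (ht : (AQ n).IsNClique 4 t) :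
    ∃ k x, 1 ≤ k ∧ k + 1 ≤ n ∧ t = cliq n k x := by
  obtain ⟨hcl, hcard⟩ := ht
  have htne : t.Nonempty := by rw [← Finset.card_pos, hcard]; norm_num
  obtain ⟨a, hat⟩ := htne
  set s := t.image (fun y => y + a) with hs_def
  have hcards : s.card = 4 := by
    rw [hs_def, Finset.card_image_of_injective _ (add_left_injective a), hcard]
  have h0s : (0 : Fin n → ZMod 2) ∈ s := by
    rw [hs_def]
    exact Finset.mem_image.mpr ⟨a, hat, addself a⟩
  have hcard3 : (s.erase 0).card = 3 := by
    rw [Finset.card_erase_of_mem h0s, hcards]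
  obtain ⟨p, q, r, hpq, hpr, hqr, hpqr⟩ := Finset.card_eq_three.mp hcard3
  have mem_gen : ∀ y ∈ s.erase 0, y ∈ genSet n := by
    intro y hy
    have hy0 := Finset.ne_of_mem_erase hy
    obtain ⟨z, hzt, rfl⟩ := Finset.mem_image.mp (Finset.mem_of_mem_erase hy)
    have hza : z ≠ a := fun h => hy0 (by rw [h, addself])
    exact (hcl hzt hat hza : _ ∧ _).2
  have sum_gen : ∀ y ∈ s.erase 0, ∀ y' ∈ s.erase 0, y ≠ y' → y + y' ∈ genSet n := by
    intro y hy y' hy'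
    obtain ⟨z, hzt, rfl⟩ := Finset.mem_image.mp (Finset.mem_of_mem_erase hy)
    obtain ⟨z', hzt', rfl⟩ := Finset.mem_image.mp (Finset.mem_of_mem_erase hy')
    intro hyy'
    have hzz' : z ≠ z' := fun h => hyy' (by rw [h])
    have : (z + a) + (z' + a) = z + z' := by
      rw [add_comm z a, add_comm z' a, red1]
    rw [this]
    exact (hcl hzt hzt' hzz' : _ ∧ _).2
  have hpmem : p ∈ s.erase 0 := by rw [hpqr]; simp
  have hqmem : q ∈ s.erase 0 := by rw [hpqr]; simp
  have hrmem : r ∈ s.erase 0 := by rw [hpqr]; simp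
  obtain ⟨K, hK1, hK2, hset⟩ := triple_classify hn (mem_gen p hpmem) (mem_gen q hqmem)
    (mem_gen r hrmem) hpq hpr hqr (sum_gen p hpmem q hqmem hpq)
    (sum_gen p hpmem r hrmem hpr) (sum_gen q hqmem r hrmem hqr)
  refine ⟨K, a, hK1, hK2, ?_⟩
  have hs4 : s = insert 0 {p, q, r} := by rw [← hpqr, Finset.insert_erase h0s]
  have himg : s.image (fun y => y + a) = t := by
    rw [hs_def, Finset.image_image]
    have : ((fun y : Fin n → ZMod 2 => y + a) ∘ (fun y => y + a)) = id := by
      funext y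
      simp only [Function.comp_apply, id_eq, add_assoc, addself, add_zero]
    rw [this, Finset.image_id]
  rw [← himg, hs4, hset]
  simp only [Finset.image_insert, Finset.image_singleton, zero_add]
  rw [cliq, add_comm (lastOnes n K) a, add_comm (lastOnes n (K+1)) a,
    add_comm (lastOnes n K + lastOnes n (K+1)) a]

lemma cliq_shift {n k : ℕ} (x u : Fin n → ZMod 2)
    (hu : u ∈ ({0, lastOnes n k, lastOnes n (k+1),
      lastOnes n k + lastOnes n (k+1)} : Finset (Fin n → ZMod 2))) :
    cliq n k (x + u) = cliq n k x := by
  set A := lastOnes n k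
  set B := lastOnes n (k+1)
  simp only [Finset.mem_insert, Finset.mem_singleton] at hu
  rcases hu with rfl | rfl | rfl | rfl
  · rw [add_zero]
  · have e1 : (x + A) + A = x := by rw [add_assoc, addself, add_zero]
    have e2 : (x + A) + B = x + (A + B) := add_assoc _ _ _
    have e3 : (x + A) + (A + B) = x + B := by rw [add_assoc, red2]
    rw [cliq, cliq, e1, e2, e3]
    ext y; simp only [Finset.mem_insert, Finset.mem_singleton]; tauto
  · have e1 : (x + B) + B = x := by rw [add_assoc, addself, add_zero]
    have e2 : (x + B) + A = x + (A + B) := by rw [add_assoc, add_comm B A]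
    have e3 : (x + B) + (A + B) = x + A := by rw [add_assoc, red5]
    rw [cliq, cliq, e1, e2, e3]
    ext y; simp only [Finset.mem_insert, Finset.mem_singleton]; tauto
  · have e1 : (x + (A + B)) + A = x + B := by rw [add_assoc, red6]
    have e2 : (x + (A + B)) + B = x + A := by rw [add_assoc, red7]
    have e3 : (x + (A + B)) + (A + B) = x := by rw [add_assoc, addself, add_zero]
    rw [cliq, cliq, e1, e2, e3]
    ext y; simp only [Finset.mem_insert, Finset.mem_singleton]; tauto

lemma cliq_norm {n k : ℕ} (hn : 4 ≤ n) (hk1 : 1 ≤ k) (hk : k + 1 ≤ n)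
    (x : Fin n → ZMod 2) :
    ∃ x', x' ⟨n-k-1, by omega⟩ = 0 ∧ x' ⟨n-1, by omega⟩ = 0 ∧ cliq n k x' = cliq n k x := by
  set A := lastOnes n k with hA
  set B := lastOnes n (k+1) with hB
  have eA1 : A ⟨n-k-1, by omega⟩ = 0 := by
    rw [hA]; simp only [lastOnes, Fin.val_mk]; rw [if_neg (by omega)]
  have eA2 : A ⟨n-1, by omega⟩ = 1 := by
    rw [hA]; simp only [lastOnes, Fin.val_mk]; rw [if_pos (by omega)]
  have eB1 : B ⟨n-k-1, by omega⟩ = 1 := by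
    rw [hB]; simp only [lastOnes, Fin.val_mk]; rw [if_pos (by omega)]
  have eB2 : B ⟨n-1, by omega⟩ = 1 := by
    rw [hB]; simp only [lastOnes, Fin.val_mk]; rw [if_pos (by omega)]
  rcases zmod2_cases (x ⟨n-k-1, by omega⟩) with hα | hα <;>
    rcases zmod2_cases (x ⟨n-1, by omega⟩) with hβ | hβ
  · exact ⟨x, hα, hβ, rfl⟩
  · -- α = 0, β = 1 : add A
    refine ⟨x + A, ?_, ?_, cliq_shift x A (by simp [hA])⟩
    · rw [Pi.add_apply, hα, eA1]; decide
    · rw [Pi.add_apply, hβ, eA2]; decide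
  · -- α = 1, β = 0 : add A + B
    refine ⟨x + (A + B), ?_, ?_, cliq_shift x (A + B) (by simp [hA, hB])⟩
    · rw [Pi.add_apply, hα, Pi.add_apply, eA1, eB1]; decide
    · rw [Pi.add_apply, hβ, Pi.add_apply, eA2, eB2]; decide
  · -- α = 1, β = 1 : add B
    refine ⟨x + B, ?_, ?_, cliq_shift x B (by simp [hB])⟩
    · rw [Pi.add_apply, hα, eB1]; decide
    · rw [Pi.add_apply, hβ, eB2]; decide

lemma cliq_inj_x {n k : ℕ} (hn : 4 ≤ n) (hk1 : 1 ≤ k) (hk : k + 1 ≤ n)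
    {x x' : Fin n → ZMod 2}
    (h1 : x ⟨n-k-1, by omega⟩ = 0) (h2 : x ⟨n-1, by omega⟩ = 0)
    (h1' : x' ⟨n-k-1, by omega⟩ = 0) (h2' : x' ⟨n-1, by omega⟩ = 0)
    (he : cliq n k x = cliq n k x') : x = x' := by
  have eA2 : lastOnes n k ⟨n-1, by omega⟩ = 1 := by
    simp only [lastOnes, Fin.val_mk]; rw [if_pos (by omega)]
  have eB2 : lastOnes n (k+1) ⟨n-1, by omega⟩ = 1 := by
    simp only [lastOnes, Fin.val_mk]; rw [if_pos (by omega)]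
  have eA1 : lastOnes n k ⟨n-k-1, by omega⟩ = 0 := by
    simp only [lastOnes, Fin.val_mk]; rw [if_neg (by omega)]
  have eB1 : lastOnes n (k+1) ⟨n-k-1, by omega⟩ = 1 := by
    simp only [lastOnes, Fin.val_mk]; rw [if_pos (by omega)]
  have hmem : x' ∈ cliq n k x := by
    rw [he]; exact Finset.mem_insert_self _ _
  simp only [cliq, Finset.mem_insert, Finset.mem_singleton] at hmem
  rcases hmem with rfl | rfl | rfl | rfl
  · rfl
  · exfalso
    rw [Pi.add_apply, h2, eA2] at h2'
    exact absurd h2' (by decide)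
  · exfalso
    rw [Pi.add_apply, h2, eB2] at h2'
    exact absurd h2' (by decide)
  · exfalso
    rw [Pi.add_apply, h1, Pi.add_apply, eA1, eB1] at h1'
    exact absurd h1' (by decide)

lemma cliq_sum_mem {n k : ℕ} (x : Fin n → ZMod 2) {u v : Fin n → ZMod 2}
    (hu : u ∈ cliq n k x) (hv : v ∈ cliq n k x) :
    u + v ∈ ({0, lastOnes n k, lastOnes n (k+1),
      lastOnes n k + lastOnes n (k+1)} : Finset (Fin n → ZMod 2)) := by
  simp only [cliq, Finset.mem_insert, Finset.mem_singleton] at hu hv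
  rcases hu with rfl | rfl | rfl | rfl <;> rcases hv with rfl | rfl | rfl | rfl <;>
    simp only [red1, red2, red3, red5, red6, red7, addself] <;>
    first
      | (rw [add_comm (lastOnes n (k+1)) (lastOnes n k)]
         simp only [Finset.mem_insert, Finset.mem_singleton]; tauto)
      | (simp only [Finset.mem_insert, Finset.mem_singleton]; tauto)

lemma cliq_k_ne {n k k' : ℕ} (hn : 4 ≤ n) (hk1 : 1 ≤ k) (hk : k + 1 ≤ n)
    (hk1' : 1 ≤ k') (hk' : k' + 1 ≤ n) (hkk' : k ≠ k')
    (x x' : Fin n → ZMod 2) : cliq n k x ≠ cliq n k' x' := by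
  intro he
  have hx : x ∈ cliq n k x := Finset.mem_insert_self _ _
  have hxB : x + lastOnes n (k+1) ∈ cliq n k x := by
    simp only [cliq, Finset.mem_insert, Finset.mem_singleton]; tauto
  have hx' : x' ∈ cliq n k' x' := Finset.mem_insert_self _ _
  have hxB' : x' + lastOnes n (k'+1) ∈ cliq n k' x' := by
    simp only [cliq, Finset.mem_insert, Finset.mem_singleton]; tauto
  have hB : lastOnes n (k+1) ∈ ({0, lastOnes n k', lastOnes n (k'+1),
      lastOnes n k' + lastOnes n (k'+1)} : Finset (Fin n → ZMod 2)) := by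
    have := cliq_sum_mem x' (he ▸ hxB) (he ▸ hx)
    rwa [red3] at this
  have hB' : lastOnes n (k'+1) ∈ ({0, lastOnes n k, lastOnes n (k+1),
      lastOnes n k + lastOnes n (k+1)} : Finset (Fin n → ZMod 2)) := by
    have := cliq_sum_mem x (he.symm ▸ hxB') (he.symm ▸ hx')
    rwa [red3] at this
  simp only [Finset.mem_insert, Finset.mem_singleton] at hB hB'
  rcases hB with h | h | h | h
  · exact lastOnes_ne_zero (by omega) (by omega) h
  · have := lastOnes_inj (by omega) (by omega) h
    -- k + 1 = k'
    rcases hB' with h' | h' | h' | h'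
    · exact lastOnes_ne_zero (by omega) (by omega) h'
    · have := lastOnes_inj (by omega) (by omega) h'
      omega
    · have := lastOnes_inj (by omega) (by omega) h'
      omega
    · rw [lastOnes_add_succ hk] at h'
      exact lastOnes_ne_stdBasis (by omega) (by omega) _ h'
  · have := lastOnes_inj (by omega) (by omega) h
    omega
  · rw [lastOnes_add_succ hk'] at h
    exact lastOnes_ne_stdBasis (by omega) (by omega) _ h

lemma triple_sum_zero {n : ℕ} (hn : 4 ≤ n) {p q r : Fin n → ZMod 2}
    (hp : p ∈ genSet n) (hq : q ∈ genSet n) (hr : r ∈ genSet n)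
    (hpq : p ≠ q) (hpr : p ≠ r) (hqr : q ≠ r)
    (spq : p + q ∈ genSet n) (spr : p + r ∈ genSet n) (sqr : q + r ∈ genSet n) :
    p + (q + r) = 0 := by
  obtain ⟨K, hK1, hK2, hset⟩ := triple_classify hn hp hq hr hpq hpr hqr spq spr sqr
  set A := lastOnes n K with hA
  set B := lastOnes n (K+1) with hB
  have hA0 : A ≠ 0 := lastOnes_ne_zero (by omega) (by omega)
  have hB0 : B ≠ 0 := lastOnes_ne_zero (by omega) (by omega)
  have hAB : A ≠ B := by
    intro h; have := lastOnes_inj (by omega) (by omega) h; omega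
  have hAc : A ≠ A + B := fun h => hB0 (left_eq_add.mp h)
  have hBc : B ≠ A + B := fun h => hA0 (right_eq_add.mp h)
  have hsum1 : ∑ z ∈ ({p, q, r} : Finset (Fin n → ZMod 2)), z = p + (q + r) := by
    rw [Finset.sum_insert (by simp [hpq, hpr]), Finset.sum_insert (by simp [hqr]),
      Finset.sum_singleton]
  have hsum2 : ∑ z ∈ ({A, B, A + B} : Finset (Fin n → ZMod 2)), z = 0 := by
    rw [Finset.sum_insert (by simp [hAB, hAc]), Finset.sum_insert (by simp [hBc]),
      Finset.sum_singleton, red5, addself]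
  rw [← hsum1, hset, hsum2]

lemma no_five_clique {n : ℕ} (hn : 4 ≤ n) (u : Finset (Fin n → ZMod 2)) :
    ¬ (AQ n).IsNClique 5 u := by
  rintro ⟨hcl, hcard⟩
  have hune : u.Nonempty := by rw [← Finset.card_pos, hcard]; norm_num
  obtain ⟨a, hat⟩ := hune
  set s := u.image (fun y => y + a) with hs_def
  have hcards : s.card = 5 := by
    rw [hs_def, Finset.card_image_of_injective _ (add_left_injective a), hcard]
  have h0s : (0 : Fin n → ZMod 2) ∈ s := by
    rw [hs_def]
    exact Finset.mem_image.mpr ⟨a, hat, addself a⟩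
  have hcard4 : (s.erase 0).card = 4 := by
    rw [Finset.card_erase_of_mem h0s, hcards]
  have mem_gen : ∀ y ∈ s.erase 0, y ∈ genSet n := by
    intro y hy
    have hy0 := Finset.ne_of_mem_erase hy
    obtain ⟨z, hzt, rfl⟩ := Finset.mem_image.mp (Finset.mem_of_mem_erase hy)
    have hza : z ≠ a := fun h => hy0 (by rw [h, addself])
    exact (hcl hzt hat hza : _ ∧ _).2
  have sum_gen : ∀ y ∈ s.erase 0, ∀ y' ∈ s.erase 0, y ≠ y' → y + y' ∈ genSet n := by
    intro y hy y' hy'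
    obtain ⟨z, hzt, rfl⟩ := Finset.mem_image.mp (Finset.mem_of_mem_erase hy)
    obtain ⟨z', hzt', rfl⟩ := Finset.mem_image.mp (Finset.mem_of_mem_erase hy')
    intro hyy'
    have hzz' : z ≠ z' := fun h => hyy' (by rw [h])
    have : (z + a) + (z' + a) = z + z' := by
      rw [add_comm z a, add_comm z' a, red1]
    rw [this]
    exact (hcl hzt hzt' hzz' : _ ∧ _).2
  -- extract four distinct elements
  have hne4 : (s.erase 0).Nonempty := by rw [← Finset.card_pos, hcard4]; norm_num
  obtain ⟨p, hps⟩ := hne4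
  have hcard3 : ((s.erase 0).erase p).card = 3 := by
    rw [Finset.card_erase_of_mem hps, hcard4]
  obtain ⟨q, r, w, hqr, hqw, hrw, hqrw⟩ := Finset.card_eq_three.mp hcard3
  have hqs : q ∈ s.erase 0 := Finset.mem_of_mem_erase (by rw [hqrw]; simp)
  have hrs : r ∈ s.erase 0 := Finset.mem_of_mem_erase (by rw [hqrw]; simp)
  have hws : w ∈ s.erase 0 := Finset.mem_of_mem_erase (by rw [hqrw]; simp)
  have hpq : p ≠ q := by
    intro h; subst h
    exact Finset.notMem_erase p (s.erase 0) (by rw [hqrw]; simp)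
  have hpr : p ≠ r := by
    intro h; subst h
    exact Finset.notMem_erase p (s.erase 0) (by rw [hqrw]; simp)
  have hpw : p ≠ w := by
    intro h; subst h
    exact Finset.notMem_erase p (s.erase 0) (by rw [hqrw]; simp)
  have t1 := triple_sum_zero hn (mem_gen p hps) (mem_gen q hqs) (mem_gen r hrs)
    hpq hpr hqr (sum_gen p hps q hqs hpq) (sum_gen p hps r hrs hpr)
    (sum_gen q hqs r hrs hqr)
  have t2 := triple_sum_zero hn (mem_gen p hps) (mem_gen q hqs) (mem_gen w hws)
    hpq hpw hqw (sum_gen p hps q hqs hpq) (sum_gen p hps w hws hpw)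
    (sum_gen q hqs w hws hqw)
  have : r = w := by
    have h := t1.trans t2.symm
    have h2 := add_left_cancel h
    exact add_left_cancel h2
  exact hrw this

lemma card_two_coord {n : ℕ} {a b : Fin n} (hab : a ≠ b) :
    (Finset.univ.filter (fun x : Fin n → ZMod 2 => x a = 0 ∧ x b = 0)).card = 2 ^ (n - 2) := by
  rw [← Fintype.card_subtype]
  have e : {x : Fin n → ZMod 2 // x a = 0 ∧ x b = 0} ≃
      ({i : Fin n // i ≠ a ∧ i ≠ b} → ZMod 2) :=
    { toFun := fun x i => x.1 i.1
      invFun := fun y => ⟨fun i => if h : i ≠ a ∧ i ≠ b then y ⟨i, h⟩ else 0, by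
        constructor
        · beta_reduce; rw [dif_neg (by simp)]
        · beta_reduce; rw [dif_neg (by simp)]⟩
      left_inv := fun x => by
        apply Subtype.ext
        funext i
        show (if h : i ≠ a ∧ i ≠ b then x.1 i else 0) = x.1 i
        by_cases h : i ≠ a ∧ i ≠ b
        · rw [dif_pos h]
        · rw [dif_neg h]
          push_neg at h
          by_cases hia : i = a
          · rw [hia, x.2.1]
          · rw [h hia, x.2.2]
      right_inv := fun y => by
        funext i
        show (if h : i.1 ≠ a ∧ i.1 ≠ b then y ⟨i.1, h⟩ else 0) = y i
        rw [dif_pos i.2] }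
  rw [Fintype.card_congr e, Fintype.card_fun]
  congr 1
  rw [Fintype.card_subtype]
  have : Finset.univ.filter (fun i : Fin n => i ≠ a ∧ i ≠ b) =
      Finset.univ \ {a, b} := by
    ext i; simp [not_or]
  rw [this, Finset.card_sdiff_of_subset (Finset.subset_univ _), Finset.card_pair hab,
    Finset.card_univ, Fintype.card_fin]


/-- For `n ≥ 4`, the clique number of `AQ_n` is 4, and `AQ_n` has exactly
`(n - 1) * 2 ^ (n - 2)` cliques of size 4. -/
theorem AQn_cliqueNum_and_count (n : ℕ) (hn : 4 ≤ n) :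
    (AQ n).cliqueNum = 4 ∧
      {t : Finset (Fin n → ZMod 2) | (AQ n).IsNClique 4 t}.ncard = (n - 1) * 2 ^ (n - 2) := by
  have h4 : (AQ n).IsNClique 4 (cliq n 1 0) := isNClique_cliq hn le_rfl (by omega) 0
  constructor
  · apply le_antisymm
    · by_contra h
      push_neg at h
      obtain ⟨smax, hsmax⟩ := (AQ n).exists_isNClique_cliqueNum
      have h5 : 5 ≤ smax.card := by rw [hsmax.card_eq]; omega
      obtain ⟨u, hu, hucard⟩ := Finset.exists_subset_card_eq h5
      exact no_five_clique hn u ⟨hsmax.isClique.subset hu, hucard⟩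
    · have := h4.isClique.card_le_cliqueNum
      rwa [h4.card_eq] at this
  · -- counting
    classical
    set T : Finset (Finset (Fin n → ZMod 2)) :=
      (Finset.Icc 1 (n-1)).biUnion (fun k =>
        (Finset.univ.filter (fun x : Fin n → ZMod 2 =>
          x ⟨n-k-1, by omega⟩ = 0 ∧ x ⟨n-1, by omega⟩ = 0)).image (cliq n k)) with hT
    have hset : {t : Finset (Fin n → ZMod 2) | (AQ n).IsNClique 4 t} = ↑T := by
      ext t
      rw [Set.mem_setOf_eq, Finset.mem_coe, hT, Finset.mem_biUnion]
      constructor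
      · intro ht
        obtain ⟨k, x, hk1, hk2, rfl⟩ := clique_eq hn ht
        obtain ⟨x', hx1, hx2, hcl⟩ := cliq_norm hn hk1 hk2 x
        refine ⟨k, Finset.mem_Icc.mpr ⟨hk1, by omega⟩, ?_⟩
        exact Finset.mem_image.mpr ⟨x', Finset.mem_filter.mpr ⟨Finset.mem_univ _, hx1, hx2⟩,
          hcl⟩
      · rintro ⟨k, hk, ht⟩
        rw [Finset.mem_Icc] at hk
        obtain ⟨x, _, rfl⟩ := Finset.mem_image.mp ht
        exact isNClique_cliq hn hk.1 (by omega) x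
    rw [hset, Set.ncard_coe_finset, hT]
    rw [Finset.card_biUnion]
    · have hcards : ∀ k ∈ Finset.Icc 1 (n-1),
          ((Finset.univ.filter (fun x : Fin n → ZMod 2 =>
            x ⟨n-k-1, by omega⟩ = 0 ∧ x ⟨n-1, by omega⟩ = 0)).image (cliq n k)).card
            = 2 ^ (n-2) := by
        intro k hk
        rw [Finset.mem_Icc] at hk
        rw [Finset.card_image_of_injOn, card_two_coord]
        · intro h
          have : (⟨n-k-1, by omega⟩ : Fin n).val = (⟨n-1, by omega⟩ : Fin n).val := by rw [h]
          simp only [Fin.val_mk] at this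
          omega
        · intro x hx x' hx' he
          rw [Finset.coe_filter] at hx hx'
          obtain ⟨-, hx1, hx2⟩ := hx
          obtain ⟨-, hx1', hx2'⟩ := hx'
          exact cliq_inj_x hn hk.1 (by omega) hx1 hx2 hx1' hx2' he
      rw [Finset.sum_congr rfl hcards, Finset.sum_const, Nat.card_Icc, smul_eq_mul]
      congr 1 <;> omega
    · intro k hk k' hk' hkk'
      rw [Finset.mem_coe, Finset.mem_Icc] at hk hk'
      simp only [Function.onFun, Finset.disjoint_left]
      intro t ht ht'
      obtain ⟨x, -, rfl⟩ := Finset.mem_image.mp ht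
      obtain ⟨x', -, he⟩ := Finset.mem_image.mp ht'
      exact cliq_k_ne hn hk.1 (by omega) hk'.1 (by omega) hkk' x x' he.symm
end

section
/- Let S ⊆ 𝔽₂ⁿ with 0 ∉ S, let X be the Cayley graph of 𝔽₂ⁿ with respect to S, and assume X is normal, i.e., every graph automorphism of X fixing the zero vertex is additive. Let G_0 be the stabilizer of 0 in Aut(X). Then a subset Δ ⊆ 𝔽₂ⁿ with 0 ∈ Δ is a block for the action of Aut(X) on the vertices (i.e., for every g ∈ Aut(X), the image g(Δ) either equals Δ or is disjoint from Δ) if and only if Δ is an additive subgroup of 𝔽₂ⁿ with g(Δ) = Δ for every g ∈ G_0. -/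
/-- The Cayley graph of `𝔽₂ⁿ` with respect to a subset `S`: distinct vertices
`x` and `y` are adjacent iff `x + y ∈ S`. -/
def Cay (n : ℕ) (S : Set (Fin n → ZMod 2)) : SimpleGraph (Fin n → ZMod 2) where
  Adj x y := x ≠ y ∧ x + y ∈ S
  symm := ⟨fun x y h => ⟨h.1.symm, by rw [add_comm]; exact h.2⟩⟩
  loopless := ⟨fun x h => h.1 rfl⟩

lemma f2_add_self {n : ℕ} (x : Fin n → ZMod 2) : x + x = 0 :=
  funext fun _ => CharTwo.add_self_eq_zero _

/-- Translation by `a` as an automorphism of the Cayley graph. -/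
def transIso (n : ℕ) (S : Set (Fin n → ZMod 2)) (a : Fin n → ZMod 2) :
    Cay n S ≃g Cay n S where
  toEquiv := Equiv.addRight a
  map_rel_iff' := by
    intro x y
    have h2 : x + a + (y + a) = x + y := by
      rw [add_add_add_comm, f2_add_self, add_zero]
    show ((x + a ≠ y + a) ∧ x + a + (y + a) ∈ S) ↔ (x ≠ y ∧ x + y ∈ S)
    rw [h2]
    simp only [ne_eq, add_left_inj]

@[simp] lemma transIso_apply {n : ℕ} (S : Set (Fin n → ZMod 2)) (a x : Fin n → ZMod 2) :
    transIso n S a x = x + a := rfl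

/-- For a normal Cayley graph `X = Cay(𝔽₂ⁿ, S)`, a subset `Δ ∋ 0` is a block of
the action of `Aut(X)` on the vertices iff `Δ` is an additive subgroup of `𝔽₂ⁿ`
invariant under the stabilizer of `0`. -/
theorem block_iff_invariant_subgroup (n : ℕ) (S : Set (Fin n → ZMod 2))
    (hS : (0 : Fin n → ZMod 2) ∉ S)
    (hnormal : ∀ g : Cay n S ≃g Cay n S, g 0 = 0 →
      ∀ x y : Fin n → ZMod 2, g (x + y) = g x + g y)
    (Δ : Set (Fin n → ZMod 2)) (h0 : (0 : Fin n → ZMod 2) ∈ Δ) :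
    (∀ g : Cay n S ≃g Cay n S, ⇑g '' Δ = Δ ∨ Disjoint (⇑g '' Δ) Δ) ↔
      ((∃ K : AddSubgroup (Fin n → ZMod 2), (K : Set (Fin n → ZMod 2)) = Δ) ∧
        ∀ g : Cay n S ≃g Cay n S, g 0 = 0 → ⇑g '' Δ = Δ) := by
  constructor
  · intro hblock
    have hstab : ∀ g : Cay n S ≃g Cay n S, g 0 = 0 → ⇑g '' Δ = Δ := by
      intro g hg0
      rcases hblock g with h | h
      · exact h
      · exfalso
        exact h.ne_of_mem (⟨0, h0, hg0⟩ : (0 : Fin n → ZMod 2) ∈ ⇑g '' Δ) h0 rfl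
    have hadd : ∀ a ∈ Δ, ∀ b ∈ Δ, a + b ∈ Δ := by
      intro a ha b hb
      have h1 : ⇑(transIso n S a) '' Δ = Δ := by
        rcases hblock (transIso n S a) with h | h
        · exact h
        · exfalso
          exact h.ne_of_mem (⟨0, h0, by simp⟩ : a ∈ ⇑(transIso n S a) '' Δ) ha rfl
      have : b + a ∈ ⇑(transIso n S a) '' Δ := ⟨b, hb, rfl⟩
      rw [h1] at this
      rwa [add_comm]
    refine ⟨⟨⟨⟨⟨Δ, fun {a b} ha hb => hadd a ha b hb⟩, h0⟩,
      fun {a} ha => by simpa [show -a = a from (neg_eq_iff_add_eq_zero).2 (f2_add_self a)] using ha⟩,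
      rfl⟩, hstab⟩
  · rintro ⟨⟨K, hK⟩, hstab⟩ g
    subst hK
    by_cases hmeet : Disjoint (⇑g '' (K : Set (Fin n → ZMod 2))) K
    · exact Or.inr hmeet
    · left
      rw [Set.not_disjoint_iff] at hmeet
      obtain ⟨z, ⟨a, ha, rfl⟩, hga⟩ := hmeet
      -- h v = g (v + a) + g a  fixes 0
      set h : Cay n S ≃g Cay n S :=
        ((transIso n S a).trans g).trans (transIso n S (g a)) with hh
      have happly : ∀ v, h v = g (v + a) + g a := fun v => rfl
      have hh0 : h 0 = 0 := by rw [happly, zero_add, f2_add_self]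
      have hHK : ⇑h '' (K : Set (Fin n → ZMod 2)) = K := hstab h hh0
      ext z
      constructor
      · rintro ⟨x, hx, rfl⟩
        have hx' : x + a ∈ K := K.add_mem hx ha
        have : h (x + a) ∈ (K : Set (Fin n → ZMod 2)) := by
          rw [← hHK]; exact ⟨x + a, hx', rfl⟩
        have heq : h (x + a) = g x + g a := by
          rw [happly, add_assoc, f2_add_self, add_zero]
        rw [heq] at this
        have := K.add_mem this hga
        rwa [add_assoc, f2_add_self, add_zero] at this
      · intro hz
        refine ⟨g.symm z, ?_, g.apply_symm_apply z⟩
        -- h.symm fixes 0 too, so h.symm '' K = K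
        have hsymm0 : h.symm 0 = 0 := by
          conv_lhs => rw [← hh0]
          exact h.symm_apply_apply 0
        have hHKs : ⇑h.symm '' (K : Set (Fin n → ZMod 2)) = K := hstab h.symm hsymm0
        have hw : z + g a ∈ K := K.add_mem hz hga
        have hmem : h.symm (z + g a) ∈ (K : Set (Fin n → ZMod 2)) := by
          rw [← hHKs]; exact ⟨z + g a, hw, rfl⟩
        have heq : h.symm (z + g a) = g.symm z + a := by
          have hcalc : h (g.symm z + a) = z + g a := by
            rw [happly, add_assoc, f2_add_self, add_zero, g.apply_symm_apply]
          rw [← hcalc, h.symm_apply_apply]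
        rw [heq] at hmem
        have := K.add_mem hmem ha
        rwa [add_assoc, f2_add_self, add_zero] at this
end

section
/- Each of the following three subsets of 𝔽₂⁴ is a block for the action of Aut(AQ_4) on the vertices of the augmented cube graph AQ_4: Δ = {0000, 0100}; Δ' = {0000, 0100, 0011, 0111}; and Δ'' = {0000, 0100, 0011, 0111, 1001, 1010, 1101, 1110}. That is, for every automorphism g of AQ_4 and each of these sets, the image under g either equals the set or is disjoint from it. -/
lemma genSet_iff (n : ℕ) (x : Fin n → ZMod 2) :
    x ∈ genSet n ↔ ((∃ j : Fin n, x = stdBasis n j) ∨ ∃ k ∈ Finset.Icc 2 n, x = lastOnes n k) := by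
  unfold genSet
  simp only [Set.mem_setOf_eq, Finset.mem_Icc]
  constructor
  · rintro (h | ⟨k, h1, h2, h3⟩)
    · exact Or.inl h
    · exact Or.inr ⟨k, ⟨h1, h2⟩, h3⟩
  · rintro (h | ⟨k, ⟨h1, h2⟩, h3⟩)
    · exact Or.inl h
    · exact Or.inr ⟨k, h1, h2, h3⟩
instance instAdjDec (n : ℕ) : DecidableRel (AQ n).Adj := fun x y =>
  decidable_of_iff (x ≠ y ∧ ((∃ j : Fin n, x + y = stdBasis n j) ∨ ∃ k ∈ Finset.Icc 2 n, x + y = lastOnes n k))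
    (Iff.trans (and_congr_right fun _ => (genSet_iff n (x+y)).symm) Iff.rfl)
abbrev V4 : Type := Fin 4 → ZMod 2
def Ccn (x y : V4) : ℕ := (Finset.univ.filter (fun z => (AQ 4).Adj x z ∧ (AQ 4).Adj y z)).card
abbrev rel4 (x y : V4) : Prop := (AQ 4).Adj x y ∧ 3 ≤ Ccn x y
abbrev rel2 (x y : V4) : Prop := x ≠ y ∧ ¬ (AQ 4).Adj x y ∧ Ccn x y ≤ 2
def bl1 (x : V4) : Finset V4 := Finset.univ.filter (fun y => y = x ∨ (¬ rel4 x y ∧ ∃ z, rel4 x z ∧ rel4 z y))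
def bl2 (x : V4) : Finset V4 := Finset.univ.filter (fun y => y = x ∨ rel4 x y ∨ ∃ z, rel4 x z ∧ rel4 z y)
def bl3 (x : V4) : Finset V4 := Finset.univ.filter (fun y => y = x ∨ rel2 x y ∨ ∃ z, rel2 x z ∧ rel2 z y)

set_option maxHeartbeats 4000000 in

lemma Ccn_map (g : AQ 4 ≃g AQ 4) (x y : V4) : Ccn (g x) (g y) = Ccn x y := by
  unfold Ccn
  exact (Finset.card_equiv g.toEquiv (fun z => by
    simp only [Finset.mem_filter, Finset.mem_univ, true_and]
    exact (and_congr (g.map_adj_iff).symm (g.map_adj_iff).symm))).symm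

lemma rel4_map (g : AQ 4 ≃g AQ 4) (x y : V4) : rel4 (g x) (g y) ↔ rel4 x y := by
  unfold rel4; rw [g.map_adj_iff, Ccn_map]

lemma rel2_map (g : AQ 4 ≃g AQ 4) (x y : V4) : rel2 (g x) (g y) ↔ rel2 x y := by
  unfold rel2
  rw [g.map_adj_iff, Ccn_map]
  exact and_congr (by simp [ne_eq]) Iff.rfl

lemma bl1_mem_map (g : AQ 4 ≃g AQ 4) {x y : V4} (h : y ∈ bl1 x) : g y ∈ bl1 (g x) := by
  simp only [bl1, Finset.mem_filter, Finset.mem_univ, true_and] at h ⊢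
  rcases h with rfl | ⟨h1, z, h2, h3⟩
  · exact Or.inl rfl
  · exact Or.inr ⟨by rwa [rel4_map], g z, (rel4_map g x z).mpr h2, (rel4_map g z y).mpr h3⟩

lemma bl2_mem_map (g : AQ 4 ≃g AQ 4) {x y : V4} (h : y ∈ bl2 x) : g y ∈ bl2 (g x) := by
  simp only [bl2, Finset.mem_filter, Finset.mem_univ, true_and] at h ⊢
  rcases h with rfl | h1 | ⟨z, h2, h3⟩
  · exact Or.inl rfl
  · exact Or.inr (Or.inl ((rel4_map g x y).mpr h1))
  · exact Or.inr (Or.inr ⟨g z, (rel4_map g x z).mpr h2, (rel4_map g z y).mpr h3⟩)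

lemma bl3_mem_map (g : AQ 4 ≃g AQ 4) {x y : V4} (h : y ∈ bl3 x) : g y ∈ bl3 (g x) := by
  simp only [bl3, Finset.mem_filter, Finset.mem_univ, true_and] at h ⊢
  rcases h with rfl | h1 | ⟨z, h2, h3⟩
  · exact Or.inl rfl
  · exact Or.inr (Or.inl ((rel2_map g x y).mpr h1))
  · exact Or.inr (Or.inr ⟨g z, (rel2_map g x z).mpr h2, (rel2_map g z y).mpr h3⟩)

lemma bl_map (bl : V4 → Finset V4)
    (hmem : ∀ (g : AQ 4 ≃g AQ 4) {x y : V4}, y ∈ bl x → g y ∈ bl (g x))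
    (g : AQ 4 ≃g AQ 4) (x : V4) : bl (g x) = (bl x).image ⇑g := by
  apply Finset.Subset.antisymm
  · intro y hy
    have h2 := hmem g.symm hy
    rw [Finset.mem_image]
    refine ⟨g.symm y, by simpa using h2, by simp⟩
  · intro y hy
    rw [Finset.mem_image] at hy
    obtain ⟨a, ha, rfl⟩ := hy
    exact hmem g ha

lemma block_of (bl : V4 → Finset V4)
    (hmem : ∀ (g : AQ 4 ≃g AQ 4) {x y : V4}, y ∈ bl x → g y ∈ bl (g x))
    (v0 : V4) (hconst : ∀ a ∈ bl v0, bl a = bl v0) (g : AQ 4 ≃g AQ 4) :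
    ⇑g '' ↑(bl v0) = ↑(bl v0) ∨ Disjoint (⇑g '' ↑(bl v0)) ↑(bl v0) := by
  by_cases h : ∃ a ∈ bl v0, g a ∈ bl v0
  · left
    obtain ⟨a, ha, hga⟩ := h
    calc ⇑g '' ↑(bl v0) = ↑((bl v0).image ⇑g) := (Finset.coe_image).symm
      _ = ↑((bl a).image ⇑g) := by rw [hconst a ha]
      _ = ↑(bl (g a)) := by rw [bl_map bl hmem g a]
      _ = ↑(bl v0) := by rw [hconst _ hga]
  · right
    rw [Set.disjoint_left]
    rintro b ⟨a, ha, rfl⟩ hb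
    exact h ⟨a, by exact_mod_cast ha, by exact_mod_cast hb⟩

set_option maxHeartbeats 8000000 in
/-- The three sets `Δ = {0000, 0100}`, `Δ' = {0000, 0100, 0011, 0111}` and
`Δ'' = {0000, 0100, 0011, 0111, 1001, 1010, 1101, 1110}` are blocks for the
action of `Aut(AQ_4)` on the vertices of `AQ_4`. -/
theorem AQ4_blocks (g : AQ 4 ≃g AQ 4) :
    (⇑g '' ({![0,0,0,0], ![0,1,0,0]} : Set (Fin 4 → ZMod 2)) =
        ({![0,0,0,0], ![0,1,0,0]} : Set (Fin 4 → ZMod 2)) ∨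
      Disjoint (⇑g '' ({![0,0,0,0], ![0,1,0,0]} : Set (Fin 4 → ZMod 2)))
        ({![0,0,0,0], ![0,1,0,0]} : Set (Fin 4 → ZMod 2))) ∧
    (⇑g '' ({![0,0,0,0], ![0,1,0,0], ![0,0,1,1], ![0,1,1,1]} : Set (Fin 4 → ZMod 2)) =
        ({![0,0,0,0], ![0,1,0,0], ![0,0,1,1], ![0,1,1,1]} : Set (Fin 4 → ZMod 2)) ∨
      Disjoint
        (⇑g '' ({![0,0,0,0], ![0,1,0,0], ![0,0,1,1], ![0,1,1,1]} : Set (Fin 4 → ZMod 2)))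
        ({![0,0,0,0], ![0,1,0,0], ![0,0,1,1], ![0,1,1,1]} : Set (Fin 4 → ZMod 2))) ∧
    (⇑g '' ({![0,0,0,0], ![0,1,0,0], ![0,0,1,1], ![0,1,1,1],
          ![1,0,0,1], ![1,0,1,0], ![1,1,0,1], ![1,1,1,0]} : Set (Fin 4 → ZMod 2)) =
        ({![0,0,0,0], ![0,1,0,0], ![0,0,1,1], ![0,1,1,1],
          ![1,0,0,1], ![1,0,1,0], ![1,1,0,1], ![1,1,1,0]} : Set (Fin 4 → ZMod 2)) ∨
      Disjoint
        (⇑g '' ({![0,0,0,0], ![0,1,0,0], ![0,0,1,1], ![0,1,1,1],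
          ![1,0,0,1], ![1,0,1,0], ![1,1,0,1], ![1,1,1,0]} : Set (Fin 4 → ZMod 2)))
        ({![0,0,0,0], ![0,1,0,0], ![0,0,1,1], ![0,1,1,1],
          ![1,0,0,1], ![1,0,1,0], ![1,1,0,1], ![1,1,1,0]} : Set (Fin 4 → ZMod 2))) := by
  have e1 : bl1 ![0,0,0,0] = ({![0,0,0,0], ![0,1,0,0]} : Finset V4) := by decide
  have e2 : bl2 ![0,0,0,0] = ({![0,0,0,0], ![0,1,0,0], ![0,0,1,1], ![0,1,1,1]} : Finset V4) := by decide
  have e3 : bl3 ![0,0,0,0] = ({![0,0,0,0], ![0,1,0,0], ![0,0,1,1], ![0,1,1,1],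
          ![1,0,0,1], ![1,0,1,0], ![1,1,0,1], ![1,1,1,0]} : Finset V4) := by decide
  have c1 : ∀ a ∈ bl1 ![0,0,0,0], bl1 a = bl1 ![0,0,0,0] := by decide
  have c2 : ∀ a ∈ bl2 ![0,0,0,0], bl2 a = bl2 ![0,0,0,0] := by decide
  have c3 : ∀ a ∈ bl3 ![0,0,0,0], bl3 a = bl3 ![0,0,0,0] := by decide
  refine ⟨?_, ?_, ?_⟩
  · have := block_of bl1 bl1_mem_map ![0,0,0,0] c1 g
    rwa [e1, Finset.coe_insert, Finset.coe_singleton] at this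
  · have := block_of bl2 bl2_mem_map ![0,0,0,0] c2 g
    rwa [e2, Finset.coe_insert, Finset.coe_insert, Finset.coe_insert,
      Finset.coe_singleton] at this
  · have := block_of bl3 bl3_mem_map ![0,0,0,0] c3 g
    rwa [e3, Finset.coe_insert, Finset.coe_insert, Finset.coe_insert, Finset.coe_insert,
      Finset.coe_insert, Finset.coe_insert, Finset.coe_insert, Finset.coe_singleton] at this
end
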